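/- arXiv:1202.4042 — 5 statements merged into one kernel-verified Lean document; each statement's English description precedes it below -/
import Mathlib

section
/- For all natural numbers n, k, m the identity of integers (n choose k) = (−1)^m · Σ_{i=0}^{n+m} (−1)^i · (i choose m) · ((n+m+1) choose (k+1+i)) holds (the sum may be taken over 0 ≤ i ≤ n+m, since all terms with k+1+i > n+m+1 vanish). -/
open Finset in
private lemma binid_base (N k : ℕ) :
    ∑ i ∈ range (N + 1), (-1 : ℤ) ^ i * (i.choose 0 : ℤ) * ((N + 1).choose (k + 1 + i) : ℤ)
      = (N.choose k : ℤ) := by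
  have h1 : ∀ i : ℕ, ((N + 1).choose (k + 1 + i) : ℤ)
      = N.choose (k + i) + N.choose (k + 1 + i) := by
    intro i
    have h : k + 1 + i = (k + i) + 1 := by ring
    rw [h, Nat.choose_succ_succ]
    push_cast; ring
  calc ∑ i ∈ range (N + 1), (-1 : ℤ) ^ i * (i.choose 0 : ℤ) * ((N + 1).choose (k + 1 + i) : ℤ)
      = ∑ i ∈ range (N + 1), ((-1 : ℤ) ^ i * (i.choose 0 : ℤ) * (N.choose (k + i) : ℤ)
          + (-1 : ℤ) ^ i * (i.choose 0 : ℤ) * (N.choose (k + 1 + i) : ℤ)) := by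
        refine Finset.sum_congr rfl fun i _ => ?_
        rw [h1 i]; ring
    _ = (∑ i ∈ range (N + 1), (-1 : ℤ) ^ i * (i.choose 0 : ℤ) * (N.choose (k + i) : ℤ))
        + ∑ i ∈ range (N + 1), (-1 : ℤ) ^ i * (i.choose 0 : ℤ) * (N.choose (k + 1 + i) : ℤ) :=
        Finset.sum_add_distrib
    _ = (N.choose k : ℤ) := by
        rw [Finset.sum_range_succ' (fun i => (-1 : ℤ) ^ i * (i.choose 0 : ℤ) * (N.choose (k + i) : ℤ)),
            Finset.sum_range_succ (fun i => (-1 : ℤ) ^ i * (i.choose 0 : ℤ) * (N.choose (k + 1 + i) : ℤ))]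
        have hz : (N.choose (k + 1 + N) : ℤ) = 0 := by
          rw [Nat.choose_eq_zero_of_lt (by omega)]; simp
        have hsum : ∑ i ∈ range N,
            (-1 : ℤ) ^ (i + 1) * ((i + 1).choose 0 : ℤ) * (N.choose (k + (i + 1)) : ℤ)
            = - ∑ i ∈ range N, (-1 : ℤ) ^ i * (i.choose 0 : ℤ) * (N.choose (k + 1 + i) : ℤ) := by
          rw [← Finset.sum_neg_distrib]
          refine Finset.sum_congr rfl fun i _ => ?_
          have h : k + (i + 1) = k + 1 + i := by ring
          rw [h]
          push_cast [pow_succ, Nat.choose_zero_right]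
          ring
        rw [hsum, hz]
        simp

open Finset in
private lemma binid_step (N k m : ℕ) :
    ∑ i ∈ range (N + 1), (-1 : ℤ) ^ i * (i.choose (m + 1) : ℤ) * ((N + 1).choose (k + 1 + i) : ℤ)
      = - ∑ i ∈ range N, (-1 : ℤ) ^ i * (i.choose m : ℤ) * (N.choose (k + 1 + i) : ℤ) := by
  have h1 : ∀ i : ℕ, ((N + 1).choose (k + 1 + i) : ℤ)
      = N.choose (k + i) + N.choose (k + 1 + i) := by
    intro i
    have h : k + 1 + i = (k + i) + 1 := by ring
    rw [h, Nat.choose_succ_succ]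
    push_cast; ring
  calc ∑ i ∈ range (N + 1), (-1 : ℤ) ^ i * (i.choose (m + 1) : ℤ) * ((N + 1).choose (k + 1 + i) : ℤ)
      = ∑ i ∈ range (N + 1), ((-1 : ℤ) ^ i * (i.choose (m + 1) : ℤ) * (N.choose (k + i) : ℤ)
          + (-1 : ℤ) ^ i * (i.choose (m + 1) : ℤ) * (N.choose (k + 1 + i) : ℤ)) := by
        refine Finset.sum_congr rfl fun i _ => ?_
        rw [h1 i]; ring
    _ = (∑ i ∈ range (N + 1), (-1 : ℤ) ^ i * (i.choose (m + 1) : ℤ) * (N.choose (k + i) : ℤ))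
        + ∑ i ∈ range (N + 1), (-1 : ℤ) ^ i * (i.choose (m + 1) : ℤ) * (N.choose (k + 1 + i) : ℤ) :=
        Finset.sum_add_distrib
    _ = - ∑ i ∈ range N, (-1 : ℤ) ^ i * (i.choose m : ℤ) * (N.choose (k + 1 + i) : ℤ) := by
        rw [Finset.sum_range_succ' (fun i => (-1 : ℤ) ^ i * (i.choose (m + 1) : ℤ) * (N.choose (k + i) : ℤ)),
            Finset.sum_range_succ (fun i => (-1 : ℤ) ^ i * (i.choose (m + 1) : ℤ) * (N.choose (k + 1 + i) : ℤ))]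
        have hz : (N.choose (k + 1 + N) : ℤ) = 0 := by
          rw [Nat.choose_eq_zero_of_lt (by omega)]; simp
        have hsum : ∑ i ∈ range N,
            (-1 : ℤ) ^ (i + 1) * ((i + 1).choose (m + 1) : ℤ) * (N.choose (k + (i + 1)) : ℤ)
            = ∑ i ∈ range N, (- ((-1 : ℤ) ^ i * (i.choose m : ℤ) * (N.choose (k + 1 + i) : ℤ))
                - (-1 : ℤ) ^ i * (i.choose (m + 1) : ℤ) * (N.choose (k + 1 + i) : ℤ)) := by
          refine Finset.sum_congr rfl fun i _ => ?_
          have h : k + (i + 1) = k + 1 + i := by ring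
          rw [h, Nat.choose_succ_succ]
          push_cast [pow_succ]
          ring
        rw [hsum, hz]
        rw [Finset.sum_sub_distrib, Finset.sum_neg_distrib]
        simp

open Finset in
private lemma binid_main (m n k : ℕ) :
    ∑ i ∈ range (n + m + 1), (-1 : ℤ) ^ i * (i.choose m : ℤ) * ((n + m + 1).choose (k + 1 + i) : ℤ)
      = (-1) ^ m * (n.choose k : ℤ) := by
  induction m with
  | zero => simpa using binid_base n k
  | succ m ih =>
    have h : n + (m + 1) + 1 = (n + m + 1) + 1 := by ring
    rw [h, binid_step (n + m + 1) k m, ih]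
    ring

/-- Proposition A.1(1): the binomial identity
`(n choose k) = (-1)^m * ∑_{i=0}^{n+m} (-1)^i * (i choose m) * ((n+m+1) choose (k+1+i))`,
as an identity of integers. -/
theorem binomial_identity (n k m : ℕ) :
    (n.choose k : ℤ) =
      (-1) ^ m * ∑ i ∈ Finset.range (n + m + 1),
        (-1) ^ i * (i.choose m : ℤ) * ((n + m + 1).choose (k + 1 + i) : ℤ) := by
  rw [binid_main m n k, ← mul_assoc, ← pow_add, Even.neg_one_pow ⟨m, rfl⟩, one_mul]
end

section
/- Let E be a finite-dimensional real inner product space, Δ ⊆ E a compact convex set with 0 in its interior, and Δ* = {y ∈ E : ⟨y, m⟩ ≥ −1 for all m ∈ Δ} its polar dual. Let σ = {(r·m, r) : m ∈ Δ, r ≥ 0} ⊆ E × ℝ be the cone over Δ × {1}. Then the dual cone of σ equals the cone over Δ* × {1}: {y ∈ E × ℝ : ⟨x, y⟩ ≥ 0 for all x ∈ σ} = {(r·n, r) : n ∈ Δ*, r ≥ 0}. -/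
open scoped RealInnerProductSpace

/-- Example 1.5: for a compact convex set `Δ ⊆ E` with `0` in its interior and polar dual
`Δ* = {y : ⟨y, m⟩ ≥ -1 for all m ∈ Δ}`, the dual of the cone
`σ = {(r•m, r) : m ∈ Δ, r ≥ 0} ⊆ E × ℝ` equals the cone over `Δ* × {1}`:
`Cone(Δ)∨ = Cone(Δ*)`. Here `E × ℝ` carries the product inner product. -/
theorem dual_cone_over_polytope_eq_cone_over_polar
    {E : Type*} [NormedAddCommGroup E] [InnerProductSpace ℝ E] [FiniteDimensional ℝ E]
    (Δ : Set E) (hcompact : IsCompact Δ) (hconv : Convex ℝ Δ)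
    (h0 : (0 : E) ∈ interior Δ) :
    {y : E × ℝ | ∀ x ∈ {p : E × ℝ | ∃ m ∈ Δ, ∃ r : ℝ, 0 ≤ r ∧ p = (r • m, r)},
        0 ≤ ⟪x.1, y.1⟫ + x.2 * y.2} =
      {p : E × ℝ | ∃ n ∈ {y : E | ∀ m ∈ Δ, -1 ≤ ⟪y, m⟫}, ∃ r : ℝ, 0 ≤ r ∧ p = (r • n, r)} := by
  ext ⟨v, t⟩
  simp only [Set.mem_setOf_eq]
  constructor
  · intro h
    -- key: for all m ∈ Δ, ⟪m, v⟫ + t ≥ 0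
    have key : ∀ m ∈ Δ, 0 ≤ ⟪m, v⟫ + t := by
      intro m hm
      have := h (m, 1) ⟨m, hm, 1, zero_le_one, by simp⟩
      simpa using this
    have h0' : (0 : E) ∈ Δ := interior_subset h0
    have ht : 0 ≤ t := by have := key 0 h0'; simpa using this
    rcases eq_or_lt_of_le ht with ht0 | htpos
    · -- t = 0; show v = 0
      have hv : v = 0 := by
        by_contra hv
        obtain ⟨ε, hε, hball⟩ := Metric.isOpen_iff.mp isOpen_interior 0 h0
        set m : E := -((ε / (2 * ‖v‖)) • v) with hm
        have hnorm : (0:ℝ) < ‖v‖ := norm_pos_iff.mpr hv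
        have hεv : 0 < ε / (2 * ‖v‖) := div_pos hε (by linarith)
        have hmem : m ∈ Δ := by
          apply interior_subset; apply hball
          simp only [Metric.mem_ball, dist_zero_right, hm, norm_neg, norm_smul,
            Real.norm_eq_abs, abs_of_pos hεv]
          rw [div_mul_eq_mul_div, mul_comm 2 ‖v‖, ← div_div,
            mul_div_assoc, div_self (norm_ne_zero_iff.mpr hv), mul_one]
          linarith
        have := key m hmem
        rw [← ht0] at this
        simp only [hm, inner_neg_left, inner_smul_left, starRingEnd_apply, star_trivial,
          real_inner_self_eq_norm_sq, add_zero] at this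
        have hnv : 0 < ‖v‖ ^ 2 := pow_pos hnorm 2
        nlinarith
      exact ⟨0, fun m _ => by simp, 0, le_refl 0, by simp [hv, ← ht0]⟩
    · refine ⟨t⁻¹ • v, fun m hm => ?_, t, ht, ?_⟩
      · have := key m hm
        rw [real_inner_smul_left]
        calc (-1 : ℝ) = t⁻¹ * (-t) := by field_simp
        _ ≤ t⁻¹ * ⟪v, m⟫ := by
            apply mul_le_mul_of_nonneg_left _ (inv_nonneg.mpr ht)
            rw [real_inner_comm]; linarith [key m hm]
      · simp [smul_smul, mul_inv_cancel₀ (ne_of_gt htpos)]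
  · rintro ⟨n, hn, r, hr, heq⟩
    rw [Prod.mk.injEq] at heq
    obtain ⟨hv, ht⟩ := heq
    rintro ⟨x, s⟩ ⟨m, hm, u, hu, hx⟩
    rw [Prod.mk.injEq] at hx
    obtain ⟨hx1, hx2⟩ := hx
    subst hv ht hx1 hx2
    simp only [real_inner_smul_left, real_inner_smul_right]
    have := hn m hm
    rw [real_inner_comm] at this
    nlinarith [mul_nonneg (mul_nonneg hr hu) (by linarith : (0:ℝ) ≤ ⟪m, n⟫ + 1)]
end

section
/- Let Δ ⊂ ℝ^n be the convex hull of a finite set of points of ℤ^n and assume Δ has nonempty interior. Let σ = {(r·m, r) : m ∈ Δ, r ≥ 0} ⊆ ℝ^{n+1} and let σ∨ = {y ∈ ℝ^{n+1} : ⟨x, y⟩ ≥ 0 for all x ∈ σ} be its dual cone. Then for every lattice point m ∈ Δ ∩ ℤ^n: m lies in the interior of Δ if and only if ⟨ȳ, (m,1)⟩ ≥ 1 for every nonzero lattice point ȳ ∈ σ∨ ∩ ℤ^{n+1}. (Equivalently, the function h'_*(m) = −inf of ⟨·,(m,1)⟩ over the nonzero lattice points of σ∨ takes the value 0 at boundary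 lattice points of Δ and −1 at interior lattice points of Δ.) -/
open Finset

/-- bound on pairing by sup norm -/
lemma ip_abs_le {n : ℕ} (w v : Fin n → ℝ) :
    |∑ j, w j * v j| ≤ (∑ j, |w j|) * ‖v‖ := by
  calc |∑ j, w j * v j| ≤ ∑ j, |w j * v j| := Finset.abs_sum_le_sum_abs _ _
    _ ≤ ∑ j, |w j| * ‖v‖ := by
        refine Finset.sum_le_sum fun j _ => ?_
        rw [abs_mul]
        exact mul_le_mul_of_nonneg_left ((Real.norm_eq_abs (v j)) ▸ norm_le_pi_norm v j) (abs_nonneg _)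
    _ = (∑ j, |w j|) * ‖v‖ := by rw [Finset.sum_mul]

/-- rational points are dense in the solution set of a rational linear system -/
lemma dense_rational_solutions {n : ℕ} (W : Finset (Fin n → ℝ)) :
    (∀ w ∈ W, ∀ j, ∃ z : ℚ, w j = (z : ℝ)) → ∀ a : Fin n → ℝ,
    (∀ w ∈ W, ∑ j, w j * a j = 0) → ∀ ε : ℝ, 0 < ε →
    ∃ q : Fin n → ℝ, (∀ j, ∃ z : ℚ, q j = (z : ℝ)) ∧ (∀ w ∈ W, ∑ j, w j * q j = 0) ∧
      dist q a < ε := by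
  classical
  induction W using Finset.induction_on with
  | empty =>
    intro _ a _ ε hε
    have h : ∀ j, ∃ z : ℚ, a j < (z : ℝ) ∧ (z : ℝ) < a j + ε :=
      fun j => exists_rat_btwn (lt_add_of_pos_right _ hε)
    choose z hz1 hz2 using h
    refine ⟨fun j => (z j : ℝ), fun j => ⟨z j, rfl⟩, by simp, ?_⟩
    rw [dist_pi_lt_iff hε]
    intro j
    rw [Real.dist_eq, abs_lt]
    constructor <;> nlinarith [hz1 j, hz2 j]
  | @insert w W hw ih =>
    intro hrat a ha ε hε
    have hratW : ∀ w' ∈ W, ∀ j, ∃ z : ℚ, w' j = (z : ℝ) :=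
      fun w' hw' => hrat w' (Finset.mem_insert_of_mem hw')
    have haW : ∀ w' ∈ W, ∑ j, w' j * a j = 0 :=
      fun w' hw' => ha w' (Finset.mem_insert_of_mem hw')
    by_cases hd : ∃ d : Fin n → ℝ, (∀ j, ∃ z : ℚ, d j = (z : ℝ)) ∧
        (∀ w' ∈ W, ∑ j, w' j * d j = 0) ∧ ∑ j, w j * d j ≠ 0
    · obtain ⟨d, hdrat, hdW, hdw⟩ := hd
      set c0 : ℝ := ∑ j, w j * d j with hc0
      have hc0' : 0 < |c0| := abs_pos.mpr hdw
      set K : ℝ := 1 + (∑ j, |w j|) * ‖d‖ / |c0| with hK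
      have hK1 : 1 ≤ K := by
        have : 0 ≤ (∑ j, |w j|) * ‖d‖ / |c0| := by positivity
        rw [hK]; linarith
      have hKpos : 0 < K := by linarith
      obtain ⟨q₀, hq₀rat, hq₀W, hq₀dist⟩ := ih hratW a haW (ε / K) (by positivity)
      set t : ℝ := (∑ j, w j * q₀ j) / c0 with ht
      refine ⟨q₀ - t • d, ?_, ?_, ?_⟩
      · intro j
        choose zw hzw using hrat w (Finset.mem_insert_self w W)
        choose zq hzq using hq₀rat
        choose zd hzd using hdrat
        refine ⟨zq j - ((∑ i, zw i * zq i) / (∑ i, zw i * zd i)) * zd j, ?_⟩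
        have hsum1 : ∑ i, w i * q₀ i = ((∑ i, zw i * zq i : ℚ) : ℝ) := by
          push_cast; exact Finset.sum_congr rfl fun i _ => by rw [hzw i, hzq i]
        have hsum2 : c0 = ((∑ i, zw i * zd i : ℚ) : ℝ) := by
          push_cast; exact Finset.sum_congr rfl fun i _ => by rw [hzw i, hzd i]
        simp only [Pi.sub_apply, Pi.smul_apply, smul_eq_mul, ht, hsum1, hsum2, hzq j, hzd j]
        push_cast
        ring
      · intro w' hw'
        have hlin : ∀ v : Fin n → ℝ, ∑ j, v j * (q₀ - t • d) j
            = (∑ j, v j * q₀ j) - t * ∑ j, v j * d j := by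
          intro v
          rw [Finset.mul_sum, ← Finset.sum_sub_distrib]
          refine Finset.sum_congr rfl fun j _ => ?_
          simp only [Pi.sub_apply, Pi.smul_apply, smul_eq_mul]
          ring
        rcases Finset.mem_insert.mp hw' with rfl | hw''
        · rw [hlin, ht, ← hc0]
          field_simp
          ring
        · rw [hlin, hq₀W w' hw'', hdW w' hw'']
          ring
      · have h1 : |∑ j, w j * q₀ j| ≤ (∑ j, |w j|) * dist q₀ a := by
          have : ∑ j, w j * q₀ j = ∑ j, w j * (q₀ - a) j := by
            have := ha w (Finset.mem_insert_self w W)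
            simp only [Pi.sub_apply, mul_sub, Finset.sum_sub_distrib, this, sub_zero]
          rw [this, dist_eq_norm]
          exact ip_abs_le w (q₀ - a)
        have h2 : dist (q₀ - t • d) a ≤ dist q₀ a + |t| * ‖d‖ := by
          have : q₀ - t • d - a = (q₀ - a) - t • d := by abel
          rw [dist_eq_norm, this]
          calc ‖(q₀ - a) - t • d‖ ≤ ‖q₀ - a‖ + ‖t • d‖ := norm_sub_le _ _
            _ = dist q₀ a + |t| * ‖d‖ := by rw [dist_eq_norm, norm_smul, Real.norm_eq_abs]
        have h3 : |t| * ‖d‖ ≤ (∑ j, |w j|) * dist q₀ a * ‖d‖ / |c0| := by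
          rw [ht, abs_div]
          have hd0 : (0:ℝ) ≤ ‖d‖ := norm_nonneg d
          rw [div_mul_eq_mul_div, div_le_div_iff₀ hc0' hc0']
          have := mul_le_mul_of_nonneg_right h1 hd0
          nlinarith [abs_nonneg c0]
        have h4 : dist q₀ a * K ≤ (ε / K) * K := by
          have := hq₀dist.le
          exact mul_le_mul_of_nonneg_right this hKpos.le
        have h5 : dist q₀ a + |t| * ‖d‖ ≤ dist q₀ a * K := by
          rw [hK]
          have hd0 : (0:ℝ) ≤ dist q₀ a := dist_nonneg
          have : (∑ j, |w j|) * dist q₀ a * ‖d‖ / |c0|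
              = dist q₀ a * ((∑ j, |w j|) * ‖d‖ / |c0|) := by ring
          rw [this] at h3
          nlinarith
        have h6 : (ε / K) * K = ε := by field_simp
        have h7 : dist q₀ a * K < ε := by
          calc dist q₀ a * K < (ε / K) * K := mul_lt_mul_of_pos_right hq₀dist hKpos
            _ = ε := h6
        linarith [h2.trans h5]
    · push_neg at hd
      obtain ⟨q, hqrat, hqW, hqdist⟩ := ih hratW a haW ε hε
      refine ⟨q, hqrat, ?_, hqdist⟩
      intro w' hw'
      rcases Finset.mem_insert.mp hw' with rfl | hw''
      · exact hd q hqrat hqW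
      · exact hqW w' hw''

/-- positive gap for finitely many nonnegative values -/
lemma exists_gap {α : Type*} (T : Finset α) (f : α → ℝ) (hf : ∀ t ∈ T, 0 ≤ f t) :
    ∃ δ : ℝ, 0 < δ ∧ ∀ t ∈ T, f t = 0 ∨ δ ≤ f t := by
  classical
  induction T using Finset.induction_on with
  | empty => exact ⟨1, one_pos, by simp⟩
  | @insert t T ht ih =>
    obtain ⟨δ, hδ, hδ'⟩ := ih (fun s hs => hf s (Finset.mem_insert_of_mem hs))
    by_cases h0 : f t = 0
    · refine ⟨δ, hδ, fun s hs => ?_⟩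
      rcases Finset.mem_insert.mp hs with rfl | hs'
      · exact Or.inl h0
      · exact hδ' s hs'
    · have hpos : 0 < f t := lt_of_le_of_ne (hf t (Finset.mem_insert_self t T)) (Ne.symm h0)
      refine ⟨min δ (f t), lt_min hδ hpos, fun s hs => ?_⟩
      rcases Finset.mem_insert.mp hs with rfl | hs'
      · exact Or.inr (min_le_right _ _)
      · rcases hδ' s hs' with h | h
        · exact Or.inl h
        · exact Or.inr (le_trans (min_le_left _ _) h)

/-- scale a rational vector to an integer one -/
lemma exists_int_scaling {n : ℕ} (q : Fin n → ℝ) (hq : ∀ j, ∃ z : ℚ, q j = (z : ℝ)) :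
    ∃ (b : Fin n → ℤ) (N : ℕ), 0 < N ∧ ∀ j, (b j : ℝ) = (N : ℝ) * q j := by
  choose z hz using hq
  refine ⟨fun j => (z j).num * ((∏ i, (z i).den) / (z j).den : ℕ), ∏ i, (z i).den,
    Finset.prod_pos fun i _ => (z i).pos, fun j => ?_⟩
  obtain ⟨c, hc⟩ := Finset.dvd_prod_of_mem (fun i => (z i).den) (Finset.mem_univ j)
  have hden : ((z j).den : ℝ) ≠ 0 := Nat.cast_ne_zero.mpr (z j).den_nz
  have hq' : (z j : ℝ) * (z j).den = (z j).num := by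
    rw [Rat.cast_def]
    field_simp
  have hdiv : ((∏ i, (z i).den) / (z j).den : ℕ) = c := by
    rw [hc]; exact Nat.mul_div_cancel_left c (z j).pos
  beta_reduce
  rw [hdiv, hz j, hc]
  push_cast
  nlinarith [hq']

/-- rationalize a nonzero supporting normal of a system of rational inequalities -/
lemma exists_int_normal {n : ℕ} (T : Finset (Fin n → ℝ))
    (hT : ∀ t ∈ T, ∀ j, ∃ z : ℚ, t j = (z : ℝ))
    (a : Fin n → ℝ) (ha : a ≠ 0) (h : ∀ t ∈ T, 0 ≤ ∑ j, t j * a j) :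
    ∃ b : Fin n → ℤ, (fun j => (b j : ℝ)) ≠ 0 ∧ ∀ t ∈ T, 0 ≤ ∑ j, t j * (b j : ℝ) := by
  classical
  obtain ⟨δ, hδ, hδ'⟩ := exists_gap T (fun t => (∑ j, t j * a j) / (∑ j, |t j| + 1))
    (fun t htT => div_nonneg (h t htT) (by positivity))
  set I : Finset (Fin n → ℝ) := T.filter (fun t => ∑ j, t j * a j = 0) with hI
  have hanorm : 0 < ‖a‖ := norm_pos_iff.mpr ha
  set ε : ℝ := min δ ‖a‖ with hε
  have hεpos : 0 < ε := lt_min hδ hanorm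
  obtain ⟨q, hqrat, hqI, hqdist⟩ := dense_rational_solutions I
    (fun w hw => hT w (Finset.mem_of_mem_filter w hw)) a
    (fun w hw => (Finset.mem_filter.mp hw).2) ε hεpos
  have hq0 : q ≠ 0 := by
    intro h0
    rw [h0, dist_zero_left] at hqdist
    exact absurd hqdist (not_lt.mpr (min_le_right δ ‖a‖))
  have hqpos : ∀ t ∈ T, 0 ≤ ∑ j, t j * q j := by
    intro t htT
    by_cases htI : t ∈ I
    · rw [hqI t htI]
    · have hne : (∑ j, t j * a j) ≠ 0 := fun hz => htI (Finset.mem_filter.mpr ⟨htT, hz⟩)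
      have hBpos : 0 < ∑ j, |t j| + 1 := by positivity
      have hge : δ ≤ (∑ j, t j * a j) / (∑ j, |t j| + 1) := by
        rcases hδ' t htT with h0 | h1
        · exact absurd (by
            field_simp at h0
            simpa using h0) hne
        · exact h1
      have hgap : δ * (∑ j, |t j| + 1) ≤ ∑ j, t j * a j := by
        rw [le_div_iff₀ hBpos] at hge
        linarith
      have hdiff : |∑ j, t j * (a j - q j)| ≤ (∑ j, |t j|) * dist q a := by
        calc |∑ j, t j * (a j - q j)| = |∑ j, t j * (a - q) j| := by
              simp only [Pi.sub_apply]
          _ ≤ (∑ j, |t j|) * ‖a - q‖ := ip_abs_le t (a - q)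
          _ = (∑ j, |t j|) * dist q a := by rw [dist_eq_norm, ← norm_neg]; congr 1; abel
      have hsub : ∑ j, t j * q j = (∑ j, t j * a j) - ∑ j, t j * (a j - q j) := by
        rw [← Finset.sum_sub_distrib]
        exact Finset.sum_congr rfl fun j _ => by ring
      have hB : (∑ j, |t j|) * dist q a < (∑ j, |t j| + 1) * δ := by
        have h1 : dist q a < δ := lt_of_lt_of_le hqdist (min_le_left _ _)
        have h2 : 0 ≤ ∑ j, |t j| := Finset.sum_nonneg fun j _ => abs_nonneg _
        nlinarith [dist_nonneg (x := q) (y := a)]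
      rw [hsub]
      have := abs_le.mp hdiff
      nlinarith
  obtain ⟨b, N, hN, hb⟩ := exists_int_scaling q hqrat
  refine ⟨b, ?_, fun t htT => ?_⟩
  · intro h0
    apply hq0
    funext j
    have := congrFun h0 j
    simp only [hb j, Pi.zero_apply] at this ⊢
    have hN' : (N : ℝ) ≠ 0 := Nat.cast_ne_zero.mpr hN.ne'
    rcases mul_eq_zero.mp this with h | h
    · exact absurd h hN'
    · exact h
  · have : ∑ j, t j * (b j : ℝ) = (N : ℝ) * ∑ j, t j * q j := by
      rw [Finset.mul_sum]
      exact Finset.sum_congr rfl fun j _ => by rw [hb j]; ring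
    rw [this]
    exact mul_nonneg (Nat.cast_nonneg N) (hqpos t htT)

/-- The lattice-point evaluation underlying Lemma 1.14(1): for a lattice polytope
`Δ ⊂ ℝ^n` with nonempty interior and `σ ⊆ ℝ^{n+1}` the cone over `Δ × {1}` with dual cone
`σ∨`, a lattice point `m ∈ Δ ∩ ℤ^n` lies in the interior of `Δ` if and only if
`⟨ȳ, (m,1)⟩ ≥ 1` for every nonzero lattice point `ȳ ∈ σ∨`. -/
theorem interior_lattice_point_iff_pairing_ge_one
    {n : ℕ} (S : Finset (Fin n → ℤ))
    (Δ : Set (Fin n → ℝ))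
    (hΔ : Δ = convexHull ℝ ((fun v : Fin n → ℤ => fun j => (v j : ℝ)) '' (S : Set (Fin n → ℤ))))
    (hint : (interior Δ).Nonempty)
    (σ : Set ((Fin n → ℝ) × ℝ))
    (hσ : σ = {p | ∃ m ∈ Δ, ∃ r : ℝ, 0 ≤ r ∧ p = (r • m, r)})
    (m : Fin n → ℤ) (hm : (fun j => (m j : ℝ)) ∈ Δ) :
    ((fun j => (m j : ℝ)) ∈ interior Δ) ↔
      ∀ y : (Fin n → ℝ) × ℝ,
        (∀ x ∈ σ, 0 ≤ (∑ j, x.1 j * y.1 j) + x.2 * y.2) →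
        (∀ j, ∃ z : ℤ, y.1 j = (z : ℝ)) → (∃ z : ℤ, y.2 = (z : ℝ)) →
        y ≠ 0 →
        1 ≤ (∑ j, y.1 j * (m j : ℝ)) + y.2 := by
  classical
  set mR : Fin n → ℝ := fun j => (m j : ℝ) with hmR
  constructor
  · -- forward: m interior ⇒ pairing ≥ 1
    intro hmint y hyσ hy1 hy2 hy0
    choose zy hzy using hy1
    obtain ⟨z2, hz2⟩ := hy2
    have hA : ∀ x ∈ Δ, 0 ≤ (∑ j, x j * y.1 j) + y.2 := by
      intro x hx
      have hxσ : ((x, (1:ℝ)) : (Fin n → ℝ) × ℝ) ∈ σ := by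
        rw [hσ]
        exact ⟨x, hx, 1, zero_le_one, by rw [one_smul]⟩
      have := hyσ _ hxσ
      simpa using this
    set val : ℤ := (∑ j, zy j * m j) + z2 with hval
    have hcast : (∑ j, y.1 j * mR j) + y.2 = (val : ℝ) := by
      rw [hval]
      push_cast
      refine congrArg₂ (· + ·) (Finset.sum_congr rfl fun j _ => ?_) hz2
      rw [hzy j]
    have hval0 : (0:ℝ) ≤ (val : ℝ) := by
      rw [← hcast]
      have := hA mR hm
      calc (0:ℝ) ≤ (∑ j, mR j * y.1 j) + y.2 := this
        _ = (∑ j, y.1 j * mR j) + y.2 := by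
            congr 1; exact Finset.sum_congr rfl fun j _ => mul_comm _ _
    have hvalne : val ≠ 0 := by
      intro hv0
      have hzero : (∑ j, y.1 j * mR j) + y.2 = 0 := by rw [hcast, hv0]; norm_num
      obtain ⟨ε, hε, hball⟩ := Metric.isOpen_iff.mp isOpen_interior mR hmint
      have hsub : Metric.ball mR ε ⊆ Δ := fun x hx => interior_subset (hball hx)
      have hy1zero : ∀ j, y.1 j = 0 := by
        intro j
        have key : ∀ t : ℝ, |t| < ε → 0 ≤ t * y.1 j := by
          intro t htε
          set x : Fin n → ℝ := fun i => if i = j then mR i + t else mR i with hx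
          have hxball : x ∈ Metric.ball mR ε := by
            rw [Metric.mem_ball, dist_pi_lt_iff hε]
            intro i
            by_cases hij : i = j
            · simp only [hx, hij, if_pos rfl]
              rw [Real.dist_eq]
              simpa using htε
            · simp [hx, hij, hε]
          have hxΔ : x ∈ Δ := hsub hxball
          have hineq := hA x hxΔ
          have hsum : (∑ i, x i * y.1 i) = (∑ i, mR i * y.1 i) + t * y.1 j := by
            have hxi : ∀ i, x i * y.1 i = mR i * y.1 i + (if i = j then t else 0) * y.1 i := by
              intro i
              by_cases hij : i = j <;> simp [hx, hij] <;> ring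
            rw [Finset.sum_congr rfl fun i _ => hxi i, Finset.sum_add_distrib]
            congr 1
            rw [Finset.sum_eq_single j]
            · simp
            · intro i _ hij; simp [hij]
            · intro hj; exact absurd (Finset.mem_univ j) hj
          rw [hsum] at hineq
          have hmy : (∑ i, mR i * y.1 i) + y.2 = 0 := by
            rw [← hzero]; congr 1
            exact Finset.sum_congr rfl fun i _ => mul_comm _ _
          linarith
        have h1 := key (ε/2) (by rw [abs_of_pos (by linarith)]; linarith)
        have h2 := key (-(ε/2)) (by rw [abs_of_neg (by linarith)]; linarith)
        nlinarith
      have hy2zero : y.2 = 0 := by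
        have hzs : (∑ j, y.1 j * mR j) = 0 :=
          Finset.sum_eq_zero fun j _ => by rw [hy1zero j, zero_mul]
        linarith [hzero]
      apply hy0
      exact Prod.ext (funext fun j => hy1zero j) hy2zero
    have h1val : (1:ℤ) ≤ val := by
      have : (0:ℤ) ≤ val := by exact_mod_cast hval0
      omega
    rw [hcast]
    exact_mod_cast h1val
  · -- backward (contrapositive)
    intro H
    by_contra hmnot
    have hconv : Convex ℝ Δ := hΔ ▸ convex_convexHull ℝ _
    obtain ⟨f, hf⟩ := geometric_hahn_banach_open_point (hconv.interior) isOpen_interior hmnot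
    obtain ⟨x₀, hx₀⟩ := hint
    have hfle : ∀ x ∈ Δ, f x ≤ f mR := by
      intro x hx
      by_contra hlt
      push_neg at hlt
      have hseg : ∀ t : ℝ, t ∈ Set.Ioc (0:ℝ) 1 → x + t • (x₀ - x) ∈ interior Δ :=
        fun t ht => hconv.add_smul_sub_mem_interior hx hx₀ ht
      set c : ℝ := f x - f mR with hc
      have hcpos : 0 < c := by rw [hc]; linarith
      set t : ℝ := min 1 (c / (2 * (|f x₀ - f x| + 1))) with htdef
      have hden : 0 < 2 * (|f x₀ - f x| + 1) := by positivity
      have htpos : 0 < t := lt_min one_pos (by positivity)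
      have ht1 : t ≤ 1 := min_le_left _ _
      have hmem := hf _ (hseg t ⟨htpos, ht1⟩)
      rw [map_add, map_smul, map_sub, smul_eq_mul] at hmem
      have htle : t ≤ c / (2 * (|f x₀ - f x| + 1)) := min_le_right _ _
      have habs : t * |f x₀ - f x| ≤ c / 2 := by
        have hle1 : t * (|f x₀ - f x| + 1) ≤ (c / (2 * (|f x₀ - f x| + 1))) * (|f x₀ - f x| + 1) :=
          mul_le_mul_of_nonneg_right htle (by positivity)
        have hle2 : (c / (2 * (|f x₀ - f x| + 1))) * (|f x₀ - f x| + 1) = c / 2 := by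
          field_simp
        nlinarith [abs_nonneg (f x₀ - f x)]
      have hbound : -(c/2) ≤ t * (f x₀ - f x) := by
        have h3 : |t * (f x₀ - f x)| ≤ c / 2 := by
          rw [abs_mul, abs_of_pos htpos]; exact habs
        linarith [(abs_le.mp h3).1]
      linarith
    -- representing vector of -f
    set av : Fin n → ℝ := fun j => -(f (fun i => if j = i then 1 else 0)) with hav
    have hfrep : ∀ v : Fin n → ℝ, f v = -(∑ j, v j * av j) := by
      intro v
      have h1 : f v = ∑ j, v j * f (fun i => if j = i then 1 else 0) := by
        conv_lhs => rw [pi_eq_sum_univ v]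
        rw [map_sum]
        exact Finset.sum_congr rfl fun j _ => by rw [map_smul, smul_eq_mul]
      rw [h1, ← Finset.sum_neg_distrib]
      refine Finset.sum_congr rfl fun j _ => ?_
      rw [hav]
      ring
    have hav0 : av ≠ 0 := by
      intro h0
      have hx0lt := hf x₀ hx₀
      have hfz : ∀ v, f v = 0 := by
        intro v
        rw [hfrep v, h0]
        simp
      rw [hfz x₀, hfz mR] at hx0lt
      exact lt_irrefl 0 hx0lt
    -- apply rationalization to the shifted generators
    set T : Finset (Fin n → ℝ) := S.image (fun s => fun j => ((s j : ℝ) - mR j)) with hT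
    have hTrat : ∀ t ∈ T, ∀ j, ∃ z : ℚ, t j = (z : ℝ) := by
      intro t htT j
      obtain ⟨s, _, rfl⟩ := Finset.mem_image.mp htT
      exact ⟨((s j : ℚ) - (m j : ℚ)), by push_cast; rfl⟩
    have hSmem : ∀ s ∈ S, (fun j => ((s j : ℤ) : ℝ)) ∈ Δ := by
      intro s hs
      rw [hΔ]
      exact subset_convexHull ℝ _ ⟨s, hs, rfl⟩
    have hTineq : ∀ t ∈ T, 0 ≤ ∑ j, t j * av j := by
      intro t htT
      obtain ⟨s, hs, rfl⟩ := Finset.mem_image.mp htT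
      have hfs : f (fun j => ((s j : ℤ) : ℝ)) ≤ f mR := hfle _ (hSmem s hs)
      have hdiff : f ((fun j => ((s j : ℤ) : ℝ)) - mR) ≤ 0 := by
        rw [map_sub]; linarith
      rw [hfrep] at hdiff
      have : 0 ≤ ∑ j, ((fun j => ((s j : ℤ) : ℝ)) - mR) j * av j := by linarith
      calc (0:ℝ) ≤ ∑ j, ((fun j => ((s j : ℤ) : ℝ)) - mR) j * av j := this
        _ = ∑ j, ((s j : ℝ) - mR j) * av j := by
            exact Finset.sum_congr rfl fun j _ => rfl
    obtain ⟨b, hbne, hbineq⟩ := exists_int_normal T hTrat av hav0 hTineq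
    -- the halfspace inequality on all of Δ
    have hlinmap : IsLinearMap ℝ (fun x : Fin n → ℝ => ∑ j, x j * (b j : ℝ)) := by
      constructor
      · intro u v
        simp only [Pi.add_apply, add_mul, Finset.sum_add_distrib]
      · intro c u
        simp only [Pi.smul_apply, smul_eq_mul, Finset.mul_sum, mul_assoc]
    have hhalf : ∀ x ∈ Δ, (∑ j, mR j * (b j : ℝ)) ≤ ∑ j, x j * (b j : ℝ) := by
      have hsubset : Δ ⊆ {x : Fin n → ℝ | (∑ j, mR j * (b j : ℝ)) ≤ ∑ j, x j * (b j : ℝ)} := by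
        rw [hΔ]
        refine convexHull_min ?_ (convex_halfSpace_ge hlinmap _)
        rintro x ⟨s, hs, rfl⟩
        have hineq := hbineq _ (Finset.mem_image.mpr ⟨s, hs, rfl⟩)
        have : ∑ j, ((s j : ℝ) - mR j) * (b j : ℝ)
            = (∑ j, (s j : ℝ) * (b j : ℝ)) - ∑ j, mR j * (b j : ℝ) := by
          rw [← Finset.sum_sub_distrib]
          exact Finset.sum_congr rfl fun j _ => by ring
        rw [this] at hineq
        simp only [Set.mem_setOf_eq]
        linarith
      exact fun x hx => hsubset hx
    -- build the violating dual lattice point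
    set y : (Fin n → ℝ) × ℝ := ((fun j => (b j : ℝ)), -(∑ j, (b j : ℝ) * mR j)) with hy
    have hyσ : ∀ x ∈ σ, 0 ≤ (∑ j, x.1 j * y.1 j) + x.2 * y.2 := by
      intro x hx
      rw [hσ] at hx
      obtain ⟨p, hp, r, hr, rfl⟩ := hx
      have hhp := hhalf p hp
      have hcomm : (∑ j, (b j : ℝ) * mR j) = ∑ j, mR j * (b j : ℝ) :=
        Finset.sum_congr rfl fun j _ => mul_comm _ _
      have h1 : ∑ j, (r • p) j * y.1 j = r * ∑ j, p j * (b j : ℝ) := by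
        rw [Finset.mul_sum]
        refine Finset.sum_congr rfl fun j _ => ?_
        show (r • p) j * (b j : ℝ) = r * (p j * (b j : ℝ))
        simp only [Pi.smul_apply, smul_eq_mul]
        ring
      have hy2v : y.2 = -∑ j, mR j * (b j : ℝ) := by
        show -∑ j, (b j : ℝ) * mR j = _
        rw [hcomm]
      have hexp : (∑ j, (r • p) j * y.1 j) + r * y.2
          = r * ((∑ j, p j * (b j : ℝ)) - ∑ j, mR j * (b j : ℝ)) := by
        rw [h1, hy2v]
        ring
      calc (0:ℝ) ≤ r * ((∑ j, p j * (b j : ℝ)) - ∑ j, mR j * (b j : ℝ)) :=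
            mul_nonneg hr (by linarith)
        _ = (∑ j, (r • p) j * y.1 j) + r * y.2 := hexp.symm
    have hy1int : ∀ j, ∃ z : ℤ, y.1 j = (z : ℝ) := fun j => ⟨b j, rfl⟩
    have hy2int : ∃ z : ℤ, y.2 = (z : ℝ) := by
      refine ⟨-(∑ j, b j * m j), ?_⟩
      rw [hy]
      push_cast
      rfl
    have hyne : y ≠ 0 := by
      intro h0
      apply hbne
      rw [hy] at h0
      exact (Prod.mk_eq_zero.mp h0).1
    have hfinal := H y hyσ hy1int hy2int hyne
    have hval : (∑ j, y.1 j * mR j) + y.2 = 0 := by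
      rw [hy]
      simp
    rw [hval] at hfinal
    linarith
end

section
/- Let v_1, …, v_k ∈ ℤ^n (k ≥ 1) be vectors that are part of a ℤ-basis of ℤ^n, and let σ = {Σ_{i=1}^k λ_i · v_i : λ_i ≥ 0} ⊆ ℝ^n be the cone they generate. Then the convex hull of the nonzero lattice points of σ is given by convexHull( (σ ∩ ℤ^n) \ {0} ) = {Σ_{i=1}^k λ_i · v_i : λ_i ≥ 0 for all i and Σ_{i=1}^k λ_i ≥ 1}. -/
lemma cast_basis_linearIndependent {n : ℕ} (b : Module.Basis (Fin n) ℤ (Fin n → ℤ)) :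
    LinearIndependent ℝ (fun t : Fin n => (fun j => (b t j : ℝ))) := by
  classical
  let M : Matrix (Fin n) (Fin n) ℤ := Matrix.of fun t j => b t j
  have hMt : (Pi.basisFun ℤ (Fin n)).toMatrix b = M.transpose := by
    ext i j
    simp [Module.Basis.toMatrix, M, Matrix.transpose]
  have : Invertible ((Pi.basisFun ℤ (Fin n)).toMatrix b) :=
    (Pi.basisFun ℤ (Fin n)).invertibleToMatrix b
  have hMdet : IsUnit M.det := by
    have h1 : IsUnit ((Pi.basisFun ℤ (Fin n)).toMatrix b).det :=
      Matrix.isUnit_det_of_invertible _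
    rw [hMt, Matrix.det_transpose] at h1
    exact h1
  have hdetR : IsUnit ((M.map (Int.cast : ℤ → ℝ)).det) := by
    have h2 : (M.map (Int.cast : ℤ → ℝ)) = (Int.castRingHom ℝ).mapMatrix M := rfl
    rw [h2, ← RingHom.map_det (Int.castRingHom ℝ) M]
    exact hMdet.map (Int.castRingHom ℝ)
  have := Matrix.linearIndependent_rows_iff_isUnit.mpr
    ((Matrix.isUnit_iff_isUnit_det _).mpr hdetR)
  exact this

/-- The Claim in the proof of Lemma 1.15(3): if `v₁, …, v_k ∈ ℤ^n` are part of a `ℤ`-basis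
of `ℤ^n` and `σ = {Σ λᵢ vᵢ : λᵢ ≥ 0} ⊆ ℝ^n` is the cone they generate, then the convex hull
of the nonzero lattice points of `σ` is `{Σ λᵢ vᵢ : λᵢ ≥ 0, Σ λᵢ ≥ 1}`. -/
theorem convexHull_nonzero_lattice_points_of_standard_cone
    {n k : ℕ} (hk : 1 ≤ k) (v : Fin k → Fin n → ℤ)
    (hbasis : ∃ b : Module.Basis (Fin n) ℤ (Fin n → ℤ), ∃ f : Fin k ↪ Fin n, ∀ i, b (f i) = v i)
    (σ : Set (Fin n → ℝ))
    (hσ : σ = {x | ∃ lam : Fin k → ℝ, (∀ i, 0 ≤ lam i) ∧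
      x = ∑ i, lam i • fun j => (v i j : ℝ)}) :
    convexHull ℝ ({x ∈ σ | ∀ j, ∃ z : ℤ, x j = (z : ℝ)} \ {0}) =
      {x | ∃ lam : Fin k → ℝ, (∀ i, 0 ≤ lam i) ∧ 1 ≤ ∑ i, lam i ∧
        x = ∑ i, lam i • fun j => (v i j : ℝ)} := by
  classical
  obtain ⟨b, f, hbf⟩ := hbasis
  set W : Fin n → Fin n → ℝ := fun t j => (b t j : ℝ) with hW
  set w : Fin k → Fin n → ℝ := fun i j => (v i j : ℝ) with hww
  have hwW : ∀ i, w i = W (f i) := by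
    intro i; funext j; simp [hW, hww, hbf i]
  have hconv : ∀ lam : Fin k → ℝ,
      (∑ i, lam i • fun j => ((v i j : ℝ))) = ∑ i, lam i • w i := fun _ => rfl
  have hLI : LinearIndependent ℝ W := cast_basis_linearIndependent b
  set S : Set (Fin n → ℝ) := {x | ∃ lam : Fin k → ℝ, (∀ i, 0 ≤ lam i) ∧ 1 ≤ ∑ i, lam i ∧
        x = ∑ i, lam i • fun j => (v i j : ℝ)} with hS
  set T : Set (Fin n → ℝ) := {x ∈ σ | ∀ j, ∃ z : ℤ, x j = (z : ℝ)} \ {0} with hT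
  -- w i ≠ 0
  have hwne : ∀ i, w i ≠ 0 := by
    intro i h
    apply b.ne_zero (f i)
    rw [hbf i]
    funext j
    have h2 : (v i j : ℝ) = 0 := by
      have h3 := congrFun h j
      simpa [hww] using h3
    exact_mod_cast h2
  -- positive natural multiples of w i are in T
  have hNwT : ∀ (N : ℕ), 0 < N → ∀ i, (N : ℝ) • w i ∈ T := by
    intro N hN i
    refine ⟨⟨?_, ?_⟩, ?_⟩
    · rw [hσ]
      refine ⟨fun i' => if i' = i then (N : ℝ) else 0, ?_, ?_⟩
      · intro i'; dsimp only; split <;> positivity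
      · rw [hconv]
        rw [show (∑ i', (if i' = i then (N : ℝ) else 0) • w i')
            = ∑ i', (if i' = i then (N : ℝ) • w i' else 0) from
          Finset.sum_congr rfl fun i' _ => by split <;> simp]
        rw [Finset.sum_ite_eq' Finset.univ i fun i' => (N : ℝ) • w i']
        simp
    · intro j
      refine ⟨N * v i j, ?_⟩
      show (N : ℝ) * w i j = _
      push_cast
      rfl
    · simp only [Set.mem_singleton_iff]
      intro h
      rcases smul_eq_zero.mp h with h' | h'
      · exact absurd h' (by positivity)
      · exact hwne i h'
  have hwT : ∀ i, w i ∈ T := by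
    intro i
    have := hNwT 1 one_pos i
    simpa using this
  set C : Set (Fin n → ℝ) := convexHull ℝ T with hC
  have hCconv : Convex ℝ C := convex_convexHull ℝ T
  apply subset_antisymm
  · -- convexHull T ⊆ S
    apply convexHull_min
    · -- T ⊆ S
      rintro x ⟨⟨hxσ, hxz⟩, hx0⟩
      simp only [Set.mem_singleton_iff] at hx0
      choose z hz using hxz
      rw [hσ] at hxσ
      obtain ⟨lam, hlam0, hlamx⟩ := hxσ
      rw [hconv] at hlamx
      have hzrepr : (fun j => ((z j : ℝ))) = ∑ t, ((b.repr z t : ℝ)) • W t := by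
        funext j
        have h1 := congrFun (b.sum_repr z) j
        have h2 : z j = ∑ c, b.repr z c * b c j := by
          simpa [Finset.sum_apply, Pi.smul_apply, smul_eq_mul] using h1.symm
        rw [Finset.sum_apply]
        simp only [Pi.smul_apply, smul_eq_mul]
        rw [h2]
        push_cast
        rfl
      have hxz' : x = fun j => ((z j : ℝ)) := funext hz
      set lamext : Fin n → ℝ := Function.extend f lam (fun _ => 0) with hlamext
      have hext : ∑ t, lamext t • W t = ∑ i, lam i • W (f i) := by
        have e1 : ∑ i, lam i • W (f i) = ∑ t ∈ Finset.univ.map f, lamext t • W t := by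
          rw [Finset.sum_map]
          refine Finset.sum_congr rfl fun i _ => ?_
          rw [hlamext, f.injective.extend_apply]
        rw [e1]
        refine (Finset.sum_subset (Finset.subset_univ _) ?_).symm
        intro t _ ht
        have hnr : ¬ ∃ i, f i = t := by
          rintro ⟨i, hi⟩
          exact ht (Finset.mem_map.mpr ⟨i, Finset.mem_univ i, hi⟩)
        rw [hlamext, Function.extend_apply' _ _ _ hnr]
        simp
      have hsum_eq : ∑ t, lamext t • W t = ∑ t, ((b.repr z t : ℝ)) • W t := by
        rw [hext]
        simp only [← hwW]
        rw [← hlamx, hxz', hzrepr]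
      have huniq : ∀ t, lamext t = (b.repr z t : ℝ) := by
        have h0 : ∑ t, (lamext t - (b.repr z t : ℝ)) • W t = 0 := by
          simp only [sub_smul, Finset.sum_sub_distrib, hsum_eq, sub_self]
        intro t
        have h6 := Fintype.linearIndependent_iff.mp hLI _ h0 t
        linarith
      have hlamint : ∀ i, lam i = (b.repr z (f i) : ℝ) := by
        intro i
        rw [← huniq (f i), hlamext, f.injective.extend_apply]
      have hex : ∃ i, lam i ≠ 0 := by
        by_contra h
        push_neg at h
        apply hx0
        rw [hlamx]
        simp [h]
      obtain ⟨i₀, hi₀⟩ := hex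
      have hge1 : 1 ≤ lam i₀ := by
        have h1 : (0 : ℤ) ≤ b.repr z (f i₀) := by
          have := hlam0 i₀
          rw [hlamint i₀] at this
          exact_mod_cast this
        have h2 : b.repr z (f i₀) ≠ 0 := by
          intro h
          apply hi₀
          rw [hlamint i₀, h]
          simp
        have h3 : (1 : ℤ) ≤ b.repr z (f i₀) := lt_of_le_of_ne h1 (Ne.symm h2)
        rw [hlamint i₀]
        exact_mod_cast h3
      refine ⟨lam, hlam0, ?_, by rw [hconv]; exact hlamx⟩
      calc (1 : ℝ) ≤ lam i₀ := hge1
        _ ≤ ∑ i, lam i := Finset.single_le_sum (fun i _ => hlam0 i) (Finset.mem_univ i₀)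
    · -- S is convex
      rintro x ⟨p, hp0, hp1, hpx⟩ y ⟨q, hq0, hq1, hqy⟩ a c ha hc hac
      refine ⟨fun i => a * p i + c * q i, ?_, ?_, ?_⟩
      · intro i
        exact add_nonneg (mul_nonneg ha (hp0 i)) (mul_nonneg hc (hq0 i))
      · have h5 : ∑ i, (a * p i + c * q i) = a * ∑ i, p i + c * ∑ i, q i := by
          rw [Finset.sum_add_distrib, ← Finset.mul_sum, ← Finset.mul_sum]
        rw [h5]
        nlinarith
      · rw [hconv] at hpx hqy
        rw [hconv (fun i => a * p i + c * q i)]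
        rw [hpx, hqy, Finset.smul_sum, Finset.smul_sum, ← Finset.sum_add_distrib]
        refine Finset.sum_congr rfl fun i _ => ?_
        rw [smul_smul, smul_smul, ← add_smul]
  · -- S ⊆ convexHull T
    rintro x ⟨lam, hlam0, hs1, hx⟩
    rw [hconv] at hx
    set s : ℝ := ∑ i, lam i with hsdef
    have hspos : (0 : ℝ) < s := lt_of_lt_of_le one_pos hs1
    have hkey : ∀ (N : ℕ), 0 < N → ∀ μ : Fin k → ℝ, (∀ i, 0 ≤ μ i) → ∑ i, μ i = 1 →
        ∑ i, μ i • ((N : ℝ) • w i) ∈ C := by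
      intro N hN μ hμ0 hμ1
      exact hCconv.sum_mem (fun i _ => hμ0 i) hμ1
        (fun i _ => subset_convexHull ℝ T (hNwT N hN i))
    set μ : Fin k → ℝ := fun i => lam i / s with hμdef
    have hμi : ∀ i, μ i = lam i / s := fun _ => rfl
    have hμ0 : ∀ i, 0 ≤ μ i := fun i => div_nonneg (hlam0 i) hspos.le
    have hμ1 : ∑ i, μ i = 1 := by
      simp only [hμi]
      rw [← Finset.sum_div, ← hsdef, div_self hspos.ne']
    have hu : x = s • ∑ i, μ i • w i := by
      rw [hx, Finset.smul_sum]
      refine Finset.sum_congr rfl fun i _ => ?_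
      rw [smul_smul, hμi]
      congr 1
      field_simp
    have huC : (∑ i, μ i • w i) ∈ C := by
      have := hkey 1 one_pos μ hμ0 hμ1
      simpa using this
    set N : ℕ := ⌈s⌉₊ with hNdef
    have hNpos : 0 < N := Nat.ceil_pos.mpr hspos
    have hsN : s ≤ (N : ℝ) := Nat.le_ceil s
    rcases eq_or_lt_of_le hs1 with hseq | hslt
    · -- s = 1
      have hx1 : x = ∑ i, μ i • w i := by
        rw [hu, ← hseq, one_smul]
      rw [hx1]
      exact huC
    · -- s > 1 so N ≥ 2
      have hN2 : 1 < N := Nat.lt_ceil.mpr (by exact_mod_cast hslt)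
      have hNr : (1 : ℝ) < N := by exact_mod_cast hN2
      set t : ℝ := (s - 1) / ((N : ℝ) - 1) with htdef
      have ht0 : 0 ≤ t := div_nonneg (by linarith) (by linarith)
      have ht1 : t ≤ 1 := (div_le_one (by linarith)).mpr (by linarith)
      have hNuC : (∑ i, μ i • ((N : ℝ) • w i)) ∈ C := hkey N hNpos μ hμ0 hμ1
      have hNu : (∑ i, μ i • ((N : ℝ) • w i)) = (N : ℝ) • ∑ i, μ i • w i := by
        rw [Finset.smul_sum]
        exact Finset.sum_congr rfl fun i _ => smul_comm _ _ _
      have hxcomb : x = (1 - t) • (∑ i, μ i • w i) + t • (∑ i, μ i • ((N : ℝ) • w i)) := by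
        rw [hNu, hu, smul_smul, ← add_smul]
        congr 1
        have hne : (N : ℝ) - 1 ≠ 0 := by linarith
        rw [htdef]
        field_simp
        ring
      rw [hxcomb]
      exact hCconv huC hNuC (by linarith) ht0 (by ring)
end

section
/- Let E be a real normed vector space of finite dimension n ≥ 1 and let K be a simplicial complex in E with finitely many faces whose underlying space ⋃_{s ∈ K.faces} convexHull(s) equals a compact convex set P with nonempty interior. Then Σ_{s ∈ K.faces, convexHull(s) ⊄ frontier(P)} (−1)^{card(s) − 1} = (−1)^n, i.e., the alternating sum of (−1)^{dim} over all faces of K not contained in the boundary of P equals (−1)^{dim P}. -/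
set_option linter.unusedSectionVars false
set_option maxHeartbeats 1000000

open Finset

namespace EulerSumAux

variable {E : Type*} [NormedAddCommGroup E] [NormedSpace ℝ E] [FiniteDimensional ℝ E]

/-- Affine independence of a finset, in weight-function form. -/
lemma indep_weights {s : Finset E} (hs : AffineIndependent ℝ ((↑) : s → E))
    {w : E → ℝ} (h0 : ∑ v ∈ s, w v = 0) (h1 : ∑ v ∈ s, w v • v = 0) :
    ∀ v ∈ s, w v = 0 := by
  classical
  have key := affineIndependent_iff.mp hs Finset.univ (fun i => w i)
  have hsum : ∑ i : s, w (i : E) = ∑ v ∈ s, w v := by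
    rw [Finset.univ_eq_attach]; exact Finset.sum_attach s (fun v => w v)
  have hvec : ∑ i : s, w (i : E) • (i : E) = ∑ v ∈ s, w v • v := by
    rw [Finset.univ_eq_attach]; exact Finset.sum_attach s (fun v => w v • v)
  intro v hv
  have := key (by rw [hsum]; exact h0) (by rw [hvec]; exact h1) ⟨v, hv⟩ (Finset.mem_univ _)
  exact this

/-- Uniqueness of barycentric weights within an affinely independent finset. -/
lemma weights_eq {s : Finset E} (hs : AffineIndependent ℝ ((↑) : s → E))
    {w₁ w₂ : E → ℝ} (h1 : ∑ v ∈ s, w₁ v = 1) (h2 : ∑ v ∈ s, w₂ v = 1)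
    (hx : ∑ v ∈ s, w₁ v • v = ∑ v ∈ s, w₂ v • v) :
    ∀ v ∈ s, w₁ v = w₂ v := by
  have h0 : ∑ v ∈ s, (w₁ v - w₂ v) = 0 := by
    rw [Finset.sum_sub_distrib, h1, h2, sub_self]
  have h1' : ∑ v ∈ s, (w₁ v - w₂ v) • v = 0 := by
    simp only [sub_smul]
    rw [Finset.sum_sub_distrib, hx, sub_self]
  intro v hv
  have := indep_weights hs h0 h1' v hv
  linarith [this]

/-- A nonnegative affine combination lies in the convex hull. -/
lemma combo_mem_convexHull {s : Finset E} {w : E → ℝ}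
    (h0 : ∀ v ∈ s, 0 ≤ w v) (h1 : ∑ v ∈ s, w v = 1) :
    (∑ v ∈ s, w v • v) ∈ convexHull ℝ (↑s : Set E) := by
  have := s.centerMass_mem_convexHull (w := w) (z := id) h0 (by rw [h1]; norm_num)
    (fun i hi => Finset.mem_coe.mpr hi)
  rwa [Finset.centerMass_eq_of_sum_1 _ _ h1] at this

/-- Points of the convex hull have nonnegative weights. -/
lemma exists_weights_of_mem_convexHull {s : Finset E} {x : E}
    (hx : x ∈ convexHull ℝ (↑s : Set E)) :
    ∃ w : E → ℝ, (∀ v ∈ s, 0 ≤ w v) ∧ ∑ v ∈ s, w v = 1 ∧ ∑ v ∈ s, w v • v = x := by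
  rw [Finset.convexHull_eq] at hx
  obtain ⟨w, hw0, hw1, hwx⟩ := hx
  exact ⟨w, hw0, hw1, by rwa [Finset.centerMass_eq_of_sum_1 _ _ hw1] at hwx⟩

/-- `GoodRep s w x` : `x` is a strictly positive convex combination of the vertices of `s`. -/
def GoodRep (s : Finset E) (w : E → ℝ) (x : E) : Prop :=
  (∀ v ∈ s, 0 < w v) ∧ ∑ v ∈ s, w v = 1 ∧ ∑ v ∈ s, w v • v = x

lemma GoodRep.mem_convexHull {s : Finset E} {w : E → ℝ} {x : E} (h : GoodRep s w x) :
    x ∈ convexHull ℝ (↑s : Set E) := by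
  rw [← h.2.2]
  exact combo_mem_convexHull (fun v hv => (h.1 v hv).le) h.2.1

/-- Membership of a point with sum-one weights in the affine span. -/
lemma mem_affineSpan_of_weights {s : Finset E} {w : E → ℝ} {x : E}
    (h1 : ∑ v ∈ s, w v = 1) (hx : ∑ v ∈ s, w v • v = x) :
    x ∈ affineSpan ℝ (↑s : Set E) := by
  classical
  have h1' : ∑ i : s, w (i : E) = 1 := by
    rw [Finset.univ_eq_attach, Finset.sum_attach s (fun v => w v)]; exact h1
  have := affineCombination_mem_affineSpan (k := ℝ) (s := Finset.univ)
    (w := fun i : s => w (i : E)) h1' (fun i : s => (i : E))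
  rw [Finset.affineCombination_eq_linear_combination _ _ _ h1'] at this
  have hvec : ∑ i : s, w (i : E) • (i : E) = x := by
    rw [Finset.univ_eq_attach, Finset.sum_attach s (fun v => w v • v)]; exact hx
  have hrange : Set.range (fun i : s => (i : E)) = (↑s : Set E) := Subtype.range_coe
  rwa [hvec, hrange] at this


-- Key combinatorial sum over a half-open Boolean interval
section Comb
variable {α : Type*} [DecidableEq α]
lemma comb_sum {σ N : Finset α} (hN : N ⊆ σ) (hNne : N ≠ σ) {n : ℕ}
    (hcard : σ.card = n + 1) :
    ∑ s ∈ σ.powerset.filter (fun s => s ≠ ∅ ∧ σ \ s ⊆ N), (-1 : ℤ) ^ (s.card - 1)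
      = if N = ∅ then (-1) ^ n else 0 := by
  classical
  set A : Finset α := σ \ N with hA
  have hAne : A.Nonempty := by
    rw [hA, Finset.sdiff_nonempty]
    intro h
    exact hNne (Finset.Subset.antisymm hN h)
  have hAsub : A ⊆ σ := Finset.sdiff_subset
  have hdisj : Disjoint A N := Finset.sdiff_disjoint
  have hAcard : A.card = σ.card - N.card := by
    rw [hA, Finset.card_sdiff_of_subset hN]
  have hApos : 1 ≤ A.card := hAne.card_pos
  -- the filtered set is the image of N.powerset under (A ∪ ·)
  have hset : σ.powerset.filter (fun s => s ≠ ∅ ∧ σ \ s ⊆ N)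
      = N.powerset.image (fun u => A ∪ u) := by
    ext s
    simp only [Finset.mem_filter, Finset.mem_powerset, Finset.mem_image]
    constructor
    · rintro ⟨hsσ, hsne, hsd⟩
      refine ⟨s ∩ N, Finset.inter_subset_right, ?_⟩
      have hAs : A ⊆ s := by
        intro v hv
        rw [hA, Finset.mem_sdiff] at hv
        by_contra hvs
        exact hv.2 (hsd (Finset.mem_sdiff.mpr ⟨hv.1, hvs⟩))
      apply Finset.Subset.antisymm
      · exact Finset.union_subset hAs Finset.inter_subset_left
      · intro v hv
        by_cases hvN : v ∈ N
        · exact Finset.mem_union_right _ (Finset.mem_inter.mpr ⟨hv, hvN⟩)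
        · exact Finset.mem_union_left _ (by rw [hA, Finset.mem_sdiff]; exact ⟨hsσ hv, hvN⟩)
    · rintro ⟨u, huN, rfl⟩
      refine ⟨Finset.union_subset hAsub (huN.trans hN), ?_, ?_⟩
      · intro h
        rw [Finset.union_eq_empty] at h
        exact hAne.ne_empty h.1
      · intro v hv
        rw [Finset.mem_sdiff, Finset.mem_union] at hv
        push_neg at hv
        rcases hv with ⟨hvσ, hvA, _⟩
        by_contra hvN
        exact hvA (by rw [hA, Finset.mem_sdiff]; exact ⟨hvσ, hvN⟩)
  rw [hset]
  rw [Finset.sum_image (by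
    intro u₁ h₁ u₂ h₂ heq
    have d₁ : Disjoint A u₁ := hdisj.mono_right (Finset.mem_powerset.mp h₁)
    have d₂ : Disjoint A u₂ := hdisj.mono_right (Finset.mem_powerset.mp h₂)
    have := congrArg (fun t => t \ A) heq
    simpa [Finset.union_sdiff_cancel_left d₁, Finset.union_sdiff_cancel_left d₂] using this)]
  have hterm : ∀ u ∈ N.powerset,
      (-1 : ℤ) ^ ((A ∪ u).card - 1) = (-1) ^ (A.card - 1) * (-1) ^ u.card := by
    intro u hu
    have d : Disjoint A u := hdisj.mono_right (Finset.mem_powerset.mp hu)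
    rw [Finset.card_union_of_disjoint d]
    rw [← pow_add]
    congr 1
    omega
  rw [Finset.sum_congr rfl hterm, ← Finset.mul_sum, Finset.sum_powerset_neg_one_pow_card]
  by_cases hNe : N = ∅
  · rw [if_pos hNe, if_pos hNe, mul_one]
    congr 1
    have : N.card = 0 := by rw [hNe]; simp
    omega
  · rw [if_neg hNe, if_neg hNe, mul_zero]


end Comb

/-- A proper-dimensional affine span has empty interior. -/
lemma interior_affineSpan_empty {n : ℕ} (hrank : Module.finrank ℝ E = n)
    {u : Finset E} (hune : u.Nonempty) (hcard : u.card ≤ n) :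
    interior ((affineSpan ℝ (↑u : Set E) : AffineSubspace ℝ E) : Set E) = ∅ := by
  by_contra h
  obtain ⟨z, hz⟩ := Set.nonempty_iff_ne_empty.mpr h
  obtain ⟨r, hr, hball⟩ := Metric.isOpen_iff.mp isOpen_interior z hz
  have hball' : Metric.ball z r ⊆ (affineSpan ℝ (↑u : Set E) : Set E) :=
    hball.trans interior_subset
  have hz' : z ∈ affineSpan ℝ (↑u : Set E) := interior_subset hz
  have hdir : (affineSpan ℝ (↑u : Set E)).direction = ⊤ := by
    rw [eq_top_iff]
    intro e _
    set c : ℝ := r / (2 * (‖e‖ + 1)) with hc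
    have hcpos : 0 < c := by positivity
    have hmem : c • e + z ∈ affineSpan ℝ (↑u : Set E) := by
      apply hball'
      rw [Metric.mem_ball, dist_eq_norm]
      have : c • e + z - z = c • e := by abel
      rw [this, norm_smul, Real.norm_eq_abs, abs_of_pos hcpos]
      have he : 0 ≤ ‖e‖ := norm_nonneg e
      rw [hc]
      rw [div_mul_eq_mul_div]
      rw [div_lt_iff₀ (by positivity)]
      nlinarith
    have hvsub : (c • e + z) -ᵥ z ∈ (affineSpan ℝ (↑u : Set E)).direction :=
      AffineSubspace.vsub_mem_direction hmem hz'
    have : c • e ∈ (affineSpan ℝ (↑u : Set E)).direction := by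
      have heq : (c • e + z) -ᵥ z = c • e := by simp [vsub_eq_sub]
      rwa [heq] at hvsub
    have := Submodule.smul_mem _ c⁻¹ this
    rwa [smul_smul, inv_mul_cancel₀ (ne_of_gt hcpos), one_smul] at this
  have hfin : Module.finrank ℝ (vectorSpan ℝ (↑u : Set E)) ≤ u.card - 1 := by
    classical
    have hc : u.card = (u.card - 1) + 1 := by
      have := hune.card_pos; omega
    have := finrank_vectorSpan_image_finset_le ℝ (id : E → E) u hc
    rwa [Finset.image_id] at this
  rw [direction_affineSpan] at hdir
  rw [hdir] at hfin
  rw [finrank_top, hrank] at hfin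
  have := hune.card_pos
  omega

/-- A nonempty open set avoids finitely many closed sets with empty interior. -/
lemma avoid_finite {ι : Type*} (A : ι → Set E) (F : Finset ι)
    (hA : ∀ u ∈ F, IsClosed (A u) ∧ interior (A u) = ∅) :
    ∀ U : Set E, IsOpen U → U.Nonempty → ∃ q ∈ U, ∀ u ∈ F, q ∉ A u := by
  classical
  induction F using Finset.induction_on with
  | empty => intro U _ hUne; obtain ⟨q, hq⟩ := hUne; exact ⟨q, hq, fun u hu => absurd hu (by simp)⟩
  | @insert a F ha ih =>
    intro U hU hUne
    set U' := U ∩ (A (a))ᶜ with hU'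
    have hUo : IsOpen U' := hU.inter (hA a (Finset.mem_insert_self _ _)).1.isOpen_compl
    have hUne' : U'.Nonempty := by
      by_contra h
      have hsub : U ⊆ A a := by
        intro x hx
        by_contra hxA
        exact h ⟨x, hx, hxA⟩
      have := interior_maximal hsub hU
      rw [(hA a (Finset.mem_insert_self _ _)).2] at this
      exact absurd (this hUne.choose_spec) (Set.notMem_empty _)
    obtain ⟨q, hq, hqF⟩ := ih (fun u hu => hA u (Finset.mem_insert_of_mem hu)) U' hUo hUne'
    refine ⟨q, hq.1, fun u hu => ?_⟩
    rcases Finset.mem_insert.mp hu with rfl | hu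
    · exact hq.2
    · exact hqF u hu


variable {K : Geometry.SimplicialComplex ℝ E}

lemma face_nonempty {s : Finset E} (hs : s ∈ K.faces) : s.Nonempty :=
  Finset.nonempty_iff_ne_empty.mpr (fun h => K.empty_notMem (h ▸ hs))

/-- Every point of a face's hull has a carrier: a subface of which it is a
strictly positive combination. -/
lemma exists_carrier {s : Finset E} (hs : s ∈ K.faces) {x : E}
    (hx : x ∈ convexHull ℝ (↑s : Set E)) :
    ∃ t w, t ∈ K.faces ∧ t ⊆ s ∧ GoodRep t w x := by
  classical
  obtain ⟨w, hw0, hw1, hwx⟩ := exists_weights_of_mem_convexHull hx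
  set t := s.filter (fun v => 0 < w v) with ht
  have hts : t ⊆ s := Finset.filter_subset _ _
  have hzero : ∀ v ∈ s, v ∉ t → w v = 0 := by
    intro v hv hvt
    have : ¬ 0 < w v := fun h => hvt (Finset.mem_filter.mpr ⟨hv, h⟩)
    linarith [hw0 v hv]
  have hsum : ∑ v ∈ t, w v = 1 := by
    rw [← hw1]; exact Finset.sum_subset hts hzero
  have hvec : ∑ v ∈ t, w v • v = x := by
    rw [← hwx]
    exact Finset.sum_subset hts (fun v hv hvt => by rw [hzero v hv hvt, zero_smul])
  have htne : t ≠ ∅ := by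
    intro h
    rw [h, Finset.sum_empty] at hsum
    norm_num at hsum
  exact ⟨t, w, K.down_closed hs hts (Finset.nonempty_iff_ne_empty.mpr htne), hts,
    fun v hv => (Finset.mem_filter.mp hv).2, hsum, hvec⟩

/-- If `x` is a strictly positive combination of `s` and lies in the hull of another
face `t`, then `s ⊆ t`. -/
lemma carrier_subset {s t : Finset E} (hs : s ∈ K.faces) (ht : t ∈ K.faces)
    {w : E → ℝ} {x : E} (hrep : GoodRep s w x)
    (hxt : x ∈ convexHull ℝ (↑t : Set E)) : s ⊆ t := by
  classical
  have hxs : x ∈ convexHull ℝ (↑s : Set E) := hrep.mem_convexHull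
  have hinter : x ∈ convexHull ℝ (↑(s ∩ t) : Set E) := by
    rw [Finset.coe_inter]
    exact K.inter_subset_convexHull hs ht ⟨hxs, hxt⟩
  obtain ⟨w', hw'0, hw'1, hw'x⟩ := exists_weights_of_mem_convexHull hinter
  set w'' : E → ℝ := fun v => if v ∈ s ∩ t then w' v else 0 with hw''
  have hsub : s ∩ t ⊆ s := Finset.inter_subset_left
  have hsum : ∑ v ∈ s, w'' v = 1 := by
    rw [← Finset.sum_subset hsub (fun v _ hv => by simp only [hw'']; rw [if_neg hv])]
    rw [← hw'1]
    exact Finset.sum_congr rfl (fun v hv => by simp only [hw'']; rw [if_pos hv])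
  have hvec : ∑ v ∈ s, w'' v • v = x := by
    rw [← Finset.sum_subset hsub
      (fun v _ hv => by simp only [hw'']; rw [if_neg hv, zero_smul])]
    rw [← hw'x]
    exact Finset.sum_congr rfl (fun v hv => by simp only [hw'']; rw [if_pos hv])
  have heq := weights_eq (K.indep hs) hrep.2.1 hsum (hrep.2.2.trans hvec.symm)
  intro v hv
  by_contra hvt
  have h0 : w'' v = 0 := by
    simp only [hw'']
    rw [if_neg (fun h : v ∈ s ∩ t => hvt (Finset.mem_inter.mp h).2)]
  have := heq v hv
  rw [h0] at this
  exact absurd this (ne_of_gt (hrep.1 v hv))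

/-- Uniqueness of the carrier. -/
lemma carrier_unique {s t : Finset E} (hs : s ∈ K.faces) (ht : t ∈ K.faces)
    {w w' : E → ℝ} {x : E} (h1 : GoodRep s w x) (h2 : GoodRep t w' x) : s = t :=
  Finset.Subset.antisymm (carrier_subset hs ht h1 h2.mem_convexHull)
    (carrier_subset ht hs h2 h1.mem_convexHull)

/-- Cardinality bound for faces. -/
lemma face_card_le {n : ℕ} (hrank : Module.finrank ℝ E = n) {s : Finset E}
    (hs : s ∈ K.faces) : s.card ≤ n + 1 := by
  classical
  have hne : s.Nonempty := face_nonempty hs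
  haveI : Nonempty (↥s) := Finset.Nonempty.to_subtype hne
  have hi := K.indep hs
  have h := hi.finrank_vectorSpan_add_one
  have hcard : Fintype.card ↥s = s.card := Fintype.card_coe s
  have hle : Module.finrank ℝ (vectorSpan ℝ (Set.range ((↑) : s → E))) ≤ n := by
    rw [← hrank]
    exact Submodule.finrank_le _
  omega

/-- A face of full cardinality affinely spans the whole space. -/
lemma span_top {n : ℕ} (hrank : Module.finrank ℝ E = n) {σ : Finset E}
    (hσ : σ ∈ K.faces) (hcard : σ.card = n + 1) :
    affineSpan ℝ (↑σ : Set E) = ⊤ := by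
  classical
  have hi := K.indep hσ
  have := hi.affineSpan_eq_top_iff_card_eq_finrank_add_one.mpr
    (by rw [Fintype.card_coe, hcard, hrank])
  have hrange : Set.range (fun i : σ => (i : E)) = (↑σ : Set E) := Subtype.range_coe
  rwa [hrange] at this

/-- Weights for an arbitrary point with respect to a full face. -/
lemma exists_weights_of_span_top {n : ℕ} (hrank : Module.finrank ℝ E = n) {σ : Finset E}
    (hσ : σ ∈ K.faces) (hcard : σ.card = n + 1) (y : E) :
    ∃ w : E → ℝ, ∑ v ∈ σ, w v = 1 ∧ ∑ v ∈ σ, w v • v = y := by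
  classical
  have htop := span_top hrank hσ hcard
  have hrange : Set.range (fun i : σ => (i : E)) = (↑σ : Set E) := Subtype.range_coe
  have hy : y ∈ affineSpan ℝ (Set.range (fun i : σ => (i : E))) := by
    rw [hrange, htop]; trivial
  obtain ⟨wι, hw1, hwy⟩ := eq_affineCombination_of_mem_affineSpan_of_fintype hy
  refine ⟨fun v => if h : v ∈ σ then wι ⟨v, h⟩ else 0, ?_, ?_⟩
  · rw [← hw1, Finset.univ_eq_attach]
    rw [← Finset.sum_attach σ (fun v => if h : v ∈ σ then wι ⟨v, h⟩ else 0)]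
    exact Finset.sum_congr rfl (fun i _ => by simp)
  · rw [Finset.affineCombination_eq_linear_combination _ _ _ hw1] at hwy
    rw [hwy, Finset.univ_eq_attach]
    rw [← Finset.sum_attach σ (fun v => (if h : v ∈ σ then wι ⟨v, h⟩ else 0) • v)]
    exact Finset.sum_congr rfl (fun i _ => by simp)


/-- Existence of a generic interior point. -/
lemma exists_generic (hfin : K.faces.Finite) {P : Set E}
    (hint : (interior P).Nonempty) {n : ℕ} (hrank : Module.finrank ℝ E = n) :
    ∃ q ∈ interior P, ∀ u ∈ K.faces, u.card ≤ n →
      q ∉ (affineSpan ℝ (↑u : Set E) : Set E) := by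
  classical
  set F := hfin.toFinset.filter (fun u => u.card ≤ n) with hF
  have hA : ∀ u ∈ F, IsClosed ((affineSpan ℝ (↑u : Set E) : Set E)) ∧
      interior ((affineSpan ℝ (↑u : Set E) : Set E)) = ∅ := by
    intro u hu
    rw [hF, Finset.mem_filter, Set.Finite.mem_toFinset] at hu
    exact ⟨(affineSpan ℝ (↑u : Set E)).closed_of_finiteDimensional,
      interior_affineSpan_empty hrank (face_nonempty hu.1) hu.2⟩
  obtain ⟨q, hq, hqF⟩ := avoid_finite _ F hA (interior P) isOpen_interior hint
  refine ⟨q, hq, fun u hu hcard => ?_⟩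
  exact hqF u (by rw [hF, Finset.mem_filter, Set.Finite.mem_toFinset]; exact ⟨hu, hcard⟩)

/-- Convex sets are contained in the closure of their (nonempty) interior. -/
lemma subset_closure_interior {P : Set E} (hconv : Convex ℝ P) {q : E}
    (hq : q ∈ interior P) : P ⊆ closure (interior P) := by
  intro p hp
  rw [Metric.mem_closure_iff]
  intro ρ hρ
  set t : ℝ := min (ρ / (2 * (dist q p + 1))) 1 with ht
  have hdist : (0:ℝ) ≤ dist q p := dist_nonneg
  have ht0 : 0 < t := lt_min (by positivity) one_pos
  have ht1 : t ≤ 1 := min_le_right _ _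
  refine ⟨t • q + (1 - t) • p,
    hconv.combo_interior_closure_mem_interior hq (subset_closure hp) ht0 (by linarith) (by ring), ?_⟩
  have heq : p - (t • q + (1 - t) • p) = t • (p - q) := by
    rw [smul_sub, sub_smul, one_smul]; abel
  rw [dist_eq_norm, heq, norm_smul, Real.norm_eq_abs, abs_of_pos ht0]
  have hpq : ‖p - q‖ = dist q p := by rw [dist_comm, dist_eq_norm]
  rw [hpq]
  have htle : t ≤ ρ / (2 * (dist q p + 1)) := min_le_left _ _
  have h2 : ρ / (2 * (dist q p + 1)) * dist q p < ρ := by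
    rw [div_mul_eq_mul_div, div_lt_iff₀ (by positivity)]
    nlinarith
  calc t * dist q p ≤ ρ / (2 * (dist q p + 1)) * dist q p := by
        apply mul_le_mul_of_nonneg_right htle hdist
    _ < ρ := h2

/-- If the carrier of `x` in `P` is not interior, then its hull lies in the frontier. -/
lemma hull_subset_frontier {P : Set E}
    (hP : P = ⋃ s ∈ K.faces, convexHull ℝ (↑s : Set E))
    (hcompact : IsCompact P) (hconv : Convex ℝ P) {q : E} (hq : q ∈ interior P)
    {s : Finset E} (hs : s ∈ K.faces) {w : E → ℝ} {x : E}
    (hrep : GoodRep s w x) (hx : x ∉ interior P) :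
    convexHull ℝ (↑s : Set E) ⊆ frontier P := by
  have hsP : convexHull ℝ (↑s : Set E) ⊆ P := by
    rw [hP]; exact Set.subset_biUnion_of_mem (u := fun s : Finset E => convexHull ℝ (↑s : Set E)) hs
  obtain ⟨f, hf⟩ := geometric_hahn_banach_open_point (hconv.interior) isOpen_interior hx
  have hPle : ∀ p ∈ P, f p ≤ f x := by
    intro p hp
    have h1 : closure (interior P) ⊆ {z | f z ≤ f x} :=
      closure_minimal (fun a ha => (hf a ha).le)
        (isClosed_le f.continuous continuous_const)
    exact h1 (subset_closure_interior hconv hq hp)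
  have hfx : f x = ∑ v ∈ s, w v * f v := by
    rw [← hrep.2.2, map_sum]
    exact Finset.sum_congr rfl (fun v _ => by rw [map_smul, smul_eq_mul])
  have hvP : ∀ v ∈ s, (v : E) ∈ P := fun v hv =>
    hsP (subset_convexHull ℝ (↑s : Set E) hv)
  have hfv : ∀ v ∈ s, f v = f x := by
    have hzero : ∑ v ∈ s, w v * (f x - f v) = 0 := by
      rw [Finset.sum_congr rfl (fun v _ => mul_sub (w v) (f x) (f v)), Finset.sum_sub_distrib,
        ← Finset.sum_mul, hrep.2.1, one_mul, hfx]
      abel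
    have hnn : ∀ v ∈ s, 0 ≤ w v * (f x - f v) := fun v hv =>
      mul_nonneg (hrep.1 v hv).le (by linarith [hPle v (hvP v hv)])
    have := (Finset.sum_eq_zero_iff_of_nonneg hnn).mp hzero
    intro v hv
    have h := this v hv
    have hw := hrep.1 v hv
    have : f x - f v = 0 := by
      rcases mul_eq_zero.mp h with h' | h'
      · exact absurd h' (ne_of_gt hw)
      · exact h'
    linarith
  intro z hz
  obtain ⟨w', hw'0, hw'1, hw'z⟩ := exists_weights_of_mem_convexHull hz
  have hfz : f z = f x := by
    rw [← hw'z, map_sum]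
    rw [Finset.sum_congr rfl (fun v hv => by rw [map_smul, smul_eq_mul, hfv v hv])]
    rw [← Finset.sum_mul, hw'1, one_mul]
  have hzP : z ∈ P := hsP hz
  have hznot : z ∉ interior P := fun h => absurd hfz (ne_of_lt (hf z h))
  rw [hcompact.isClosed.frontier_eq]
  exact ⟨hzP, hznot⟩


section Main

variable [DecidableEq E]
variable {n : ℕ} {P : Set E} {q : E} {Wq : Finset E → E → ℝ}

/-- The half-open condition: `σ` is a full face containing `s`, and all vertices of `σ`
outside `s` have negative `q`-weight. -/
def Cond (Wq : Finset E → E → ℝ) (s σ : Finset E) : Prop :=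
  s ⊆ σ ∧ ∀ v ∈ σ, v ∉ s → Wq σ v < 0

variable (hn : 1 ≤ n) (hrank : Module.finrank ℝ E = n)
  (hqgen : ∀ u ∈ K.faces, u.card ≤ n → q ∉ (affineSpan ℝ (↑u : Set E) : Set E))
  (hWq : ∀ σ, σ ∈ K.faces → σ.card = n + 1 →
    ∑ v ∈ σ, Wq σ v = 1 ∧ ∑ v ∈ σ, Wq σ v • v = q)

include hn hrank hqgen hWq in
lemma Wq_ne_zero {σ : Finset E} (hσ : σ ∈ K.faces) (hcard : σ.card = n + 1)
    {v : E} (hv : v ∈ σ) : Wq σ v ≠ 0 := by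
  classical
  intro h0
  have h1 : ∑ u ∈ σ.erase v, Wq σ u = 1 := by
    rw [Finset.sum_erase _ h0]; exact (hWq σ hσ hcard).1
  have h2 : ∑ u ∈ σ.erase v, Wq σ u • u = q := by
    rw [Finset.sum_erase _ (by rw [h0, zero_smul])]; exact (hWq σ hσ hcard).2
  have hcard' : (σ.erase v).card = n := by rw [Finset.card_erase_of_mem hv, hcard]; omega
  have hne : σ.erase v ≠ ∅ := by
    have : 0 < (σ.erase v).card := by omega
    exact Finset.card_pos.mp this |>.ne_empty
  have hface : σ.erase v ∈ K.faces := K.down_closed hσ (Finset.erase_subset _ _) (Finset.nonempty_iff_ne_empty.mpr hne)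
  exact hqgen _ hface (le_of_eq hcard') (mem_affineSpan_of_weights h1 h2)

/-- The weights of the point `x + ε • (x - q)` with respect to a full face `σ ⊇ s`. -/
lemma wy_rep {s σ : Finset E} (hσ : σ ∈ K.faces) (hcard : σ.card = n + 1)
    (hsub : s ⊆ σ) {w : E → ℝ} {x : E}
    (hw1 : ∑ v ∈ s, w v = 1) (hwx : ∑ v ∈ s, w v • v = x)
    (hWq : ∀ σ, σ ∈ K.faces → σ.card = n + 1 →
      ∑ v ∈ σ, Wq σ v = 1 ∧ ∑ v ∈ σ, Wq σ v • v = q) (ε : ℝ) :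
    ∑ v ∈ σ, ((1 + ε) * (if v ∈ s then w v else 0) - ε * Wq σ v) = 1 ∧
    ∑ v ∈ σ, ((1 + ε) * (if v ∈ s then w v else 0) - ε * Wq σ v) • v = x + ε • (x - q) := by
  classical
  have hf1 : ∑ v ∈ σ, (if v ∈ s then w v else 0) = 1 := by
    rw [← Finset.sum_subset hsub (fun v _ hv => if_neg hv)]
    rw [← hw1]
    exact Finset.sum_congr rfl (fun v hv => if_pos hv)
  have hfx : ∑ v ∈ σ, (if v ∈ s then w v else 0) • v = x := by
    rw [← Finset.sum_subset hsub (fun v _ hv => by rw [if_neg hv, zero_smul])]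
    rw [← hwx]
    exact Finset.sum_congr rfl (fun v hv => by rw [if_pos hv])
  constructor
  · rw [Finset.sum_sub_distrib, ← Finset.mul_sum, ← Finset.mul_sum, hf1, (hWq σ hσ hcard).1]
    ring
  · have : ∀ v ∈ σ, ((1 + ε) * (if v ∈ s then w v else 0) - ε * Wq σ v) • v
        = (1 + ε) • ((if v ∈ s then w v else 0) • v) - ε • (Wq σ v • v) := by
      intro v _
      rw [sub_smul, mul_smul, mul_smul]
    rw [Finset.sum_congr rfl this, Finset.sum_sub_distrib, ← Finset.smul_sum, ← Finset.smul_sum,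
      hfx, (hWq σ hσ hcard).2]
    module

include hrank hWq in
/-- Under `Cond`, points slightly beyond `x` away from `q` stay in `σ`. -/
lemma cond_mem {s σ : Finset E} (hσ : σ ∈ K.faces) (hcard : σ.card = n + 1)
    (hc : Cond Wq s σ) {w : E → ℝ} {x : E} (hrep : GoodRep s w x) (hsne : s.Nonempty) :
    ∃ δ > 0, ∀ ε : ℝ, 0 < ε → ε ≤ δ → x + ε • (x - q) ∈ convexHull ℝ (↑σ : Set E) := by
  classical
  have hσne : σ.Nonempty := hsne.mono hc.1
  set m : ℝ := s.inf' hsne w with hm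
  have hm0 : 0 < m := (Finset.lt_inf'_iff hsne).mpr hrep.1
  set M : ℝ := σ.sup' hσne (fun v => |Wq σ v|) with hM
  have hM0 : 0 ≤ M := by
    obtain ⟨v, hv⟩ := hσne
    exact (abs_nonneg (Wq σ v)).trans (Finset.le_sup' (fun u => |Wq σ u|) hv)
  refine ⟨m / (M + 1), by positivity, fun ε hε hεδ => ?_⟩
  have hεM : ε * (M + 1) ≤ m := by
    rw [← le_div_iff₀ (by positivity)]; exact hεδ
  have hkey : ∀ v ∈ σ, 0 ≤ (1 + ε) * (if v ∈ s then w v else 0) - ε * Wq σ v := by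
    intro v hv
    by_cases hvs : v ∈ s
    · rw [if_pos hvs]
      have hwv : m ≤ w v := Finset.inf'_le _ hvs
      have habs : |Wq σ v| ≤ M := Finset.le_sup' (fun u => |Wq σ u|) hv
      have h1 : Wq σ v ≤ M := (le_abs_self _).trans habs
      nlinarith [hrep.1 v hvs, mul_le_mul_of_nonneg_left h1 hε.le]
    · rw [if_neg hvs]
      have := hc.2 v hv hvs
      nlinarith
  obtain ⟨h1, h2⟩ := wy_rep hσ hcard hc.1 hrep.2.1 hrep.2.2 hWq ε
  rw [← h2]
  exact combo_mem_convexHull hkey h1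

include hrank hWq in
/-- Under `Cond`, the carrier point `x` is interior to `P`. -/
lemma cond_interior {s σ : Finset E} (hσ : σ ∈ K.faces) (hcard : σ.card = n + 1)
    (hc : Cond Wq s σ) {w : E → ℝ} {x : E} (hrep : GoodRep s w x) (hsne : s.Nonempty)
    (hP : P = ⋃ s ∈ K.faces, convexHull ℝ (↑s : Set E))
    (hconv : Convex ℝ P) (hqint : q ∈ interior P) :
    x ∈ interior P := by
  obtain ⟨δ, hδ, hmem⟩ := cond_mem hrank hWq hσ hcard hc hrep hsne
  set y : E := x + δ • (x - q) with hy
  have hyP : y ∈ P := by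
    rw [hP]
    exact Set.subset_biUnion_of_mem (u := fun s : Finset E => convexHull ℝ (↑s : Set E)) hσ
      (hmem δ hδ le_rfl)
  set a : ℝ := δ / (1 + δ) with ha
  set b : ℝ := 1 / (1 + δ) with hb
  have h1δ : (0:ℝ) < 1 + δ := by linarith
  have hab : a + b = 1 := by rw [ha, hb]; field_simp; try ring
  have hxeq : a • q + b • y = x := by
    have hcancel : (1 + δ) • (a • q + b • y) = (1 + δ) • x := by
      rw [smul_add, smul_smul, smul_smul]
      have h1 : (1 + δ) * a = δ := by rw [ha]; field_simp; try ring
      have h2 : (1 + δ) * b = 1 := by rw [hb]; field_simp; try ring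
      rw [h1, h2, hy]
      module
    exact smul_right_injective E (ne_of_gt h1δ) hcancel
  rw [← hxeq]
  exact hconv.combo_interior_closure_mem_interior hqint (subset_closure hyP)
    (by positivity) (by positivity) hab

include hn hrank hqgen hWq in
/-- Uniqueness of the full face satisfying `Cond s`. -/
lemma cond_unique {s σ₁ σ₂ : Finset E} (hσ₁ : σ₁ ∈ K.faces) (hcard₁ : σ₁.card = n + 1)
    (hσ₂ : σ₂ ∈ K.faces) (hcard₂ : σ₂.card = n + 1)
    (hc₁ : Cond Wq s σ₁) (hc₂ : Cond Wq s σ₂) {w : E → ℝ} {x : E}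
    (hrep : GoodRep s w x) (hsne : s.Nonempty) : σ₁ = σ₂ := by
  classical
  by_contra hne
  obtain ⟨δ₁, hδ₁, hmem₁⟩ := cond_mem hrank hWq hσ₁ hcard₁ hc₁ hrep hsne
  obtain ⟨δ₂, hδ₂, hmem₂⟩ := cond_mem hrank hWq hσ₂ hcard₂ hc₂ hrep hsne
  set ε₁ : ℝ := min δ₁ δ₂ with hε₁
  set ε₂ : ℝ := ε₁ / 2 with hε₂
  have hε₁0 : 0 < ε₁ := lt_min hδ₁ hδ₂
  have hε₂0 : 0 < ε₂ := by rw [hε₂]; positivity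
  set y₁ : E := x + ε₁ • (x - q) with hy₁
  set y₂ : E := x + ε₂ • (x - q) with hy₂
  have hsubinter : s ⊆ σ₁ ∩ σ₂ := Finset.subset_inter hc₁.1 hc₂.1
  have hfaceinter : σ₁ ∩ σ₂ ∈ K.faces :=
    K.down_closed hσ₁ Finset.inter_subset_left (hsne.mono hsubinter)
  have hmemi : ∀ y, y ∈ convexHull ℝ (↑σ₁ : Set E) → y ∈ convexHull ℝ (↑σ₂ : Set E) →
      y ∈ convexHull ℝ (↑(σ₁ ∩ σ₂) : Set E) := by
    intro y h1 h2
    rw [Finset.coe_inter]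
    exact K.inter_subset_convexHull hσ₁ hσ₂ ⟨h1, h2⟩
  have hy₁i : y₁ ∈ convexHull ℝ (↑(σ₁ ∩ σ₂) : Set E) :=
    hmemi _ (hmem₁ ε₁ hε₁0 (min_le_left _ _)) (hmem₂ ε₁ hε₁0 (min_le_right _ _))
  have hy₂i : y₂ ∈ convexHull ℝ (↑(σ₁ ∩ σ₂) : Set E) :=
    hmemi _ (hmem₁ ε₂ hε₂0 (by rw [hε₂]; linarith [min_le_left δ₁ δ₂]))
      (hmem₂ ε₂ hε₂0 (by rw [hε₂]; linarith [min_le_right δ₁ δ₂]))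
  have hcardle : (σ₁ ∩ σ₂).card ≤ n := by
    by_contra h
    have hle : (σ₁ ∩ σ₂).card ≤ n + 1 := face_card_le hrank hfaceinter
    have heq : σ₁ ∩ σ₂ = σ₁ :=
      Finset.eq_of_subset_of_card_le Finset.inter_subset_left (by omega)
    have hsub12 : σ₁ ⊆ σ₂ := by rw [← heq]; exact Finset.inter_subset_right
    exact hne (Finset.eq_of_subset_of_card_le hsub12 (by omega))
  -- q lies on the line through y₁, y₂
  set c : ℝ := -(1 + ε₁) / (ε₁ - ε₂) with hc
  have hεne : ε₁ - ε₂ ≠ 0 := by rw [hε₂]; intro h; nlinarith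
  have h12 : y₁ - y₂ = (ε₁ - ε₂) • (x - q) := by rw [hy₁, hy₂]; module
  have hcc : c * (ε₁ - ε₂) = -(1 + ε₁) := by rw [hc]; field_simp; try ring
  have hqeq : c • (y₁ -ᵥ y₂) +ᵥ y₁ = q := by
    rw [vsub_eq_sub, vadd_eq_add, h12, smul_smul, hcc, hy₁]
    module
  have hy₁s : y₁ ∈ affineSpan ℝ (↑(σ₁ ∩ σ₂) : Set E) :=
    convexHull_subset_affineSpan _ hy₁i
  have hy₂s : y₂ ∈ affineSpan ℝ (↑(σ₁ ∩ σ₂) : Set E) :=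
    convexHull_subset_affineSpan _ hy₂i
  have hqmem : q ∈ affineSpan ℝ (↑(σ₁ ∩ σ₂) : Set E) := by
    rw [← hqeq]
    exact AffineSubspace.smul_vsub_vadd_mem _ c hy₁s hy₂s hy₁s
  exact hqgen _ hfaceinter hcardle hqmem


include hn hrank hqgen hWq in
/-- Existence of the full face satisfying `Cond s`, for interior carrier points. -/
lemma cond_exists (hfin : K.faces.Finite)
    (hP : P = ⋃ s ∈ K.faces, convexHull ℝ (↑s : Set E))
    {s : Finset E} (hs : s ∈ K.faces) {w : E → ℝ} {x : E}
    (hrep : GoodRep s w x) (hxint : x ∈ interior P)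
    {sq : Finset E} {wq : E → ℝ} (hsq : sq ∈ K.faces) (hsqcard : sq.card = n + 1)
    (hsqrep : GoodRep sq wq q) :
    ∃ σ, σ ∈ K.faces ∧ σ.card = n + 1 ∧ Cond Wq s σ := by
  classical
  by_cases hxq : x = q
  · subst hxq
    have hseq : s = sq := carrier_unique hs hsq hrep hsqrep
    exact ⟨s, hs, by rw [hseq]; exact hsqcard, Finset.Subset.refl s,
      fun v hv hvs => absurd hv hvs⟩
  obtain ⟨r, hr, hball⟩ := Metric.isOpen_iff.mp isOpen_interior x hxint
  have hxqn : (0:ℝ) < ‖x - q‖ := by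
    rw [norm_pos_iff]; exact sub_ne_zero.mpr hxq
  set δ₀ : ℝ := r / (2 * ‖x - q‖) with hδ₀
  have hδ₀pos : 0 < δ₀ := by positivity
  have hyP : ∀ ε : ℝ, 0 < ε → ε ≤ δ₀ → x + ε • (x - q) ∈ P := by
    intro ε h0 h1
    have hd : dist (x + ε • (x - q)) x < r := by
      rw [dist_eq_norm]
      have heq : x + ε • (x - q) - x = ε • (x - q) := by abel
      rw [heq, norm_smul, Real.norm_eq_abs, abs_of_pos h0]
      calc ε * ‖x - q‖ ≤ δ₀ * ‖x - q‖ := mul_le_mul_of_nonneg_right h1 (norm_nonneg _)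
        _ < r := by
            rw [hδ₀, div_mul_eq_mul_div, div_lt_iff₀ (by positivity)]
            nlinarith
    exact interior_subset (hball (Metric.mem_ball.mpr hd))
  set εk : ℕ → ℝ := fun k => δ₀ / ((k : ℝ) + 1) with hεk
  have hεkpos : ∀ k, 0 < εk k := fun k => by
    rw [hεk]
    have : (0:ℝ) < (k : ℝ) + 1 := by positivity
    positivity
  have hεkle : ∀ k, εk k ≤ δ₀ := fun k => by
    rw [hεk]
    apply div_le_self hδ₀pos.le
    have : (0:ℝ) ≤ (k : ℝ) := Nat.cast_nonneg k
    linarith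
  have hex : ∀ k : ℕ, ∃ u, u ∈ K.faces ∧
      x + εk k • (x - q) ∈ convexHull ℝ (↑u : Set E) := by
    intro k
    have hmem := hyP (εk k) (hεkpos k) (hεkle k)
    rw [hP] at hmem
    simpa using Set.mem_iUnion₂.mp hmem
  choose f hf1 hf2 using hex
  haveI : Finite ↥K.faces := hfin.to_subtype
  obtain ⟨u₀, hu₀⟩ := Finite.exists_infinite_fiber (fun k : ℕ => (⟨f k, hf1 k⟩ : ↥K.faces))
  set u : Finset E := (u₀ : Finset E) with hudef
  have hu : u ∈ K.faces := u₀.2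
  have hS : ((fun k : ℕ => (⟨f k, hf1 k⟩ : ↥K.faces)) ⁻¹' {u₀}).Infinite :=
    Set.infinite_coe_iff.mp hu₀
  have hfS : ∀ k ∈ (fun k : ℕ => (⟨f k, hf1 k⟩ : ↥K.faces)) ⁻¹' {u₀}, f k = u := by
    intro k hk
    have : (⟨f k, hf1 k⟩ : ↥K.faces) = u₀ := hk
    exact congrArg Subtype.val this
  have hyu : ∀ k ∈ (fun k : ℕ => (⟨f k, hf1 k⟩ : ↥K.faces)) ⁻¹' {u₀},
      x + εk k • (x - q) ∈ convexHull ℝ (↑u : Set E) := by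
    intro k hk
    have := hf2 k
    rwa [hfS k hk] at this
  -- x lies in the (closed) hull of u
  have hclosed : IsClosed (convexHull ℝ (↑u : Set E)) := u.finite_toSet.isClosed_convexHull ℝ
  have hxu : x ∈ convexHull ℝ (↑u : Set E) := by
    rw [← hclosed.closure_eq]
    rw [Metric.mem_closure_iff]
    intro ρ hρ
    obtain ⟨k, hkS, hk⟩ := hS.exists_gt (Nat.ceil (δ₀ * ‖x - q‖ / ρ))
    refine ⟨x + εk k • (x - q), hyu k hkS, ?_⟩
    have heq : x - (x + εk k • (x - q)) = (-(εk k)) • (x - q) := by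
      rw [neg_smul]; abel
    rw [dist_eq_norm, heq, norm_smul, Real.norm_eq_abs, abs_neg, abs_of_pos (hεkpos k)]
    have hceil : δ₀ * ‖x - q‖ / ρ < (k : ℝ) := by
      calc δ₀ * ‖x - q‖ / ρ ≤ (Nat.ceil (δ₀ * ‖x - q‖ / ρ) : ℝ) := Nat.le_ceil _
        _ < (k : ℝ) := by exact_mod_cast hk
    rw [hεk]
    rw [div_mul_eq_mul_div, div_lt_iff₀ (by positivity)]
    rw [div_lt_iff₀ hρ] at hceil
    nlinarith [Nat.cast_nonneg (α := ℝ) k]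
  have hsu : s ⊆ u := carrier_subset hs hu hrep hxu
  obtain ⟨k₀, hk₀⟩ := hS.nonempty
  set ε₀ : ℝ := εk k₀ with hε₀
  have hε₀pos : 0 < ε₀ := hεkpos k₀
  have hy₀u : x + ε₀ • (x - q) ∈ convexHull ℝ (↑u : Set E) := hyu k₀ hk₀
  have hucard : u.card = n + 1 := by
    by_contra hne'
    have hle : u.card ≤ n + 1 := face_card_le hrank hu
    have hlen : u.card ≤ n := by omega
    have hy₀s : x + ε₀ • (x - q) ∈ affineSpan ℝ (↑u : Set E) :=
      convexHull_subset_affineSpan _ hy₀u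
    have hxs : x ∈ affineSpan ℝ (↑u : Set E) := convexHull_subset_affineSpan _ hxu
    have hqeq : (-(ε₀)⁻¹) • ((x + ε₀ • (x - q)) -ᵥ x) +ᵥ x = q := by
      rw [vsub_eq_sub, vadd_eq_add]
      have h1 : (x + ε₀ • (x - q)) - x = ε₀ • (x - q) := by abel
      rw [h1, smul_smul]
      have h2 : (-(ε₀)⁻¹) * ε₀ = -1 := by field_simp
      rw [h2]
      module
    have hqmem : q ∈ affineSpan ℝ (↑u : Set E) := by
      rw [← hqeq]
      exact AffineSubspace.smul_vsub_vadd_mem _ _ hy₀s hxs hxs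
    exact hqgen u hu hlen hqmem
  refine ⟨u, hu, hucard, hsu, fun v hv hvs => ?_⟩
  obtain ⟨wn, hwn0, hwn1, hwnx⟩ := exists_weights_of_mem_convexHull hy₀u
  obtain ⟨h1, h2⟩ := wy_rep hu hucard hsu hrep.2.1 hrep.2.2 hWq ε₀
  have heqw := weights_eq (K.indep hu) h1 hwn1 (h2.trans hwnx.symm) v hv
  rw [if_neg hvs] at heqw
  have hWle : Wq u v ≤ 0 := by nlinarith [hwn0 v hv]
  exact lt_of_le_of_ne hWle (Wq_ne_zero hn hrank hqgen hWq hu hucard hv)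


end Main

end EulerSumAux

open EulerSumAux

open Classical in
/-- Lemma 5.2(2): if a finite simplicial complex `K` in an `n`-dimensional real normed
space (`n ≥ 1`) has underlying space a compact convex set `P` with nonempty interior, then
the alternating sum of `(-1)^dim` over all faces of `K` not contained in the boundary of
`P` equals `(-1)^n`. -/
theorem alternating_sum_faces_not_in_boundary
    {E : Type*} [NormedAddCommGroup E] [NormedSpace ℝ E] [FiniteDimensional ℝ E]
    {n : ℕ} (hn : 1 ≤ n) (hrank : Module.finrank ℝ E = n)
    (K : Geometry.SimplicialComplex ℝ E) (hfin : K.faces.Finite)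
    (P : Set E) (hP : P = ⋃ s ∈ K.faces, convexHull ℝ (↑s : Set E))
    (hcompact : IsCompact P) (hconv : Convex ℝ P) (hint : (interior P).Nonempty) :
    ∑ s ∈ hfin.toFinset.filter
        (fun s : Finset E => ¬ convexHull ℝ (↑s : Set E) ⊆ frontier P),
      (-1 : ℤ) ^ (s.card - 1) = (-1) ^ n := by
  classical
  -- generic interior point q
  obtain ⟨q, hqint, hqgen⟩ := exists_generic hfin hint hrank
  -- carrier of q
  have hqP : q ∈ P := interior_subset hqint
  have hqmem : ∃ s₀ ∈ K.faces, q ∈ convexHull ℝ (↑s₀ : Set E) := by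
    rw [hP] at hqP
    simpa using Set.mem_iUnion₂.mp hqP
  obtain ⟨s₀, hs₀, hqs₀⟩ := hqmem
  obtain ⟨sqq, wqq, hsq, hsqsub, hsqrep⟩ := exists_carrier hs₀ hqs₀
  have hsqcard : sqq.card = n + 1 := by
    have hle := face_card_le hrank hsq
    by_contra h
    exact hqgen sqq hsq (by omega)
      (convexHull_subset_affineSpan _ hsqrep.mem_convexHull)
  -- weights of q with respect to each full face
  have hWex : ∀ σ : Finset E, ∃ w : E → ℝ, σ ∈ K.faces → σ.card = n + 1 →
      ∑ v ∈ σ, w v = 1 ∧ ∑ v ∈ σ, w v • v = q := by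
    intro σ
    by_cases h : σ ∈ K.faces ∧ σ.card = n + 1
    · obtain ⟨w, hw⟩ := exists_weights_of_span_top hrank h.1 h.2 q
      exact ⟨w, fun _ _ => hw⟩
    · exact ⟨0, fun h1 h2 => absurd ⟨h1, h2⟩ h⟩
  choose Wq hWq using hWex
  -- centroid of a face
  have hcentroid : ∀ s ∈ K.faces, GoodRep s (fun _ => (s.card : ℝ)⁻¹)
      (∑ v ∈ s, ((s.card : ℝ)⁻¹) • v) := by
    intro s hs
    have hpos : 0 < s.card := (face_nonempty hs).card_pos
    have hcast : ((s.card : ℝ)) ≠ 0 := Nat.cast_ne_zero.mpr hpos.ne'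
    refine ⟨fun v _ => by positivity, ?_, rfl⟩
    rw [Finset.sum_const, nsmul_eq_mul, mul_inv_cancel₀ hcast]
  -- the sets of faces
  set T : Finset (Finset E) := hfin.toFinset.filter (fun σ => σ.card = n + 1) with hT
  have hTmem : ∀ σ ∈ T, σ ∈ K.faces ∧ σ.card = n + 1 := by
    intro σ hσ
    rw [hT, Finset.mem_filter, Set.Finite.mem_toFinset] at hσ
    exact hσ
  -- counting: interior faces are counted exactly once
  have hA : ∀ s, s ∈ K.faces → ¬ convexHull ℝ (↑s : Set E) ⊆ frontier P →
      (T.filter (fun σ => Cond Wq s σ)).card = 1 := by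
    intro s hs hpred
    have hrep := hcentroid s hs
    have hxint : (∑ v ∈ s, ((s.card : ℝ)⁻¹) • v) ∈ interior P := by
      by_contra h
      exact hpred (hull_subset_frontier hP hcompact hconv hqint hs hrep h)
    obtain ⟨σ₀, hσ₀, hσ₀card, hσ₀cond⟩ :=
      cond_exists hn hrank hqgen hWq hfin hP hs hrep hxint hsq hsqcard hsqrep
    rw [Finset.card_eq_one]
    refine ⟨σ₀, ?_⟩
    ext σ
    simp only [Finset.mem_filter, Finset.mem_singleton]
    constructor
    · rintro ⟨hσT, hcond⟩
      obtain ⟨hσf, hσc⟩ := hTmem σ hσT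
      exact cond_unique hn hrank hqgen hWq hσf hσc hσ₀ hσ₀card hcond hσ₀cond hrep
        (face_nonempty hs)
    · rintro rfl
      exact ⟨by rw [hT, Finset.mem_filter, Set.Finite.mem_toFinset]; exact ⟨hσ₀, hσ₀card⟩,
        hσ₀cond⟩
  -- boundary faces are not counted
  have hB : ∀ s, s ∈ K.faces → convexHull ℝ (↑s : Set E) ⊆ frontier P →
      ∀ σ ∈ T, ¬ Cond Wq s σ := by
    intro s hs hpred σ hσT hcond
    obtain ⟨hσf, hσc⟩ := hTmem σ hσT
    have hrep := hcentroid s hs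
    have hxint := cond_interior hrank hWq hσf hσc hcond hrep (face_nonempty hs) hP hconv hqint
    have hxfr : (∑ v ∈ s, ((s.card : ℝ)⁻¹) • v) ∈ frontier P :=
      hpred hrep.mem_convexHull
    rw [hcompact.isClosed.frontier_eq] at hxfr
    exact hxfr.2 hxint
  -- main computation
  rw [Finset.sum_filter]
  have step1 : ∀ s ∈ hfin.toFinset,
      (if ¬ convexHull ℝ (↑s : Set E) ⊆ frontier P then (-1 : ℤ) ^ (s.card - 1) else 0)
        = ∑ σ ∈ T, (if Cond Wq s σ then (-1 : ℤ) ^ (s.card - 1) else 0) := by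
    intro s hsF
    have hs : s ∈ K.faces := (Set.Finite.mem_toFinset hfin).mp hsF
    by_cases hpred : ¬ convexHull ℝ (↑s : Set E) ⊆ frontier P
    · rw [if_pos hpred, ← Finset.sum_filter, Finset.sum_const, hA s hs hpred, one_smul]
    · rw [if_neg hpred]
      push_neg at hpred
      exact (Finset.sum_eq_zero (fun σ hσ => if_neg (hB s hs hpred σ hσ))).symm
  rw [Finset.sum_congr rfl step1, Finset.sum_comm]
  -- per-σ inner sum
  have step2 : ∀ σ ∈ T,
      ∑ s ∈ hfin.toFinset, (if Cond Wq s σ then (-1 : ℤ) ^ (s.card - 1) else 0)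
        = if σ.filter (fun v => Wq σ v < 0) = ∅ then (-1 : ℤ) ^ n else 0 := by
    intro σ hσT
    obtain ⟨hσf, hσc⟩ := hTmem σ hσT
    set N : Finset E := σ.filter (fun v => Wq σ v < 0) with hN
    have hNsub : N ⊆ σ := Finset.filter_subset _ _
    have hNne : N ≠ σ := by
      intro h
      have hall : ∀ v ∈ σ, Wq σ v < 0 := by
        intro v hv
        have : v ∈ N := by rw [h]; exact hv
        exact (Finset.mem_filter.mp this).2
      have hsum := (hWq σ hσf hσc).1
      have hlt : ∑ v ∈ σ, Wq σ v < ∑ v ∈ σ, (0:ℝ) :=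
        Finset.sum_lt_sum_of_nonempty (face_nonempty hσf) hall
      rw [Finset.sum_const_zero, hsum] at hlt
      norm_num at hlt
    have hsets : hfin.toFinset.filter (fun s => Cond Wq s σ)
        = σ.powerset.filter (fun s => s ≠ ∅ ∧ σ \ s ⊆ N) := by
      ext s
      simp only [Finset.mem_filter, Finset.mem_powerset, Set.Finite.mem_toFinset]
      constructor
      · rintro ⟨hsf, hsub, hneg⟩
        refine ⟨hsub, (face_nonempty hsf).ne_empty, ?_⟩
        intro v hv
        rw [Finset.mem_sdiff] at hv
        rw [hN, Finset.mem_filter]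
        exact ⟨hv.1, hneg v hv.1 hv.2⟩
      · rintro ⟨hsub, hsne, hsd⟩
        refine ⟨K.down_closed hσf hsub (Finset.nonempty_iff_ne_empty.mpr hsne), hsub, ?_⟩
        intro v hv hvs
        have : v ∈ N := hsd (Finset.mem_sdiff.mpr ⟨hv, hvs⟩)
        rw [hN, Finset.mem_filter] at this
        exact this.2
    rw [← Finset.sum_filter, hsets]
    exact comb_sum hNsub hNne hσc
  rw [Finset.sum_congr rfl step2]
  -- exactly one full face has all positive weights: the carrier of q
  have hfinal : T.filter (fun σ => σ.filter (fun v => Wq σ v < 0) = ∅) = {sqq} := by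
    ext σ
    simp only [Finset.mem_filter, Finset.mem_singleton]
    constructor
    · rintro ⟨hσT, hNσ⟩
      obtain ⟨hσf, hσc⟩ := hTmem σ hσT
      have hpos : ∀ v ∈ σ, 0 < Wq σ v := by
        intro v hv
        have hne := Wq_ne_zero (K := K) hn hrank hqgen hWq hσf hσc hv
        have : ¬ Wq σ v < 0 := by
          intro h
          have : v ∈ σ.filter (fun v => Wq σ v < 0) := Finset.mem_filter.mpr ⟨hv, h⟩
          rw [hNσ] at this
          exact absurd this (Finset.notMem_empty v)
        rcases lt_trichotomy (Wq σ v) 0 with h | h | h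
        · exact absurd h this
        · exact absurd h hne
        · exact h
      have hrepσ : GoodRep σ (Wq σ) q := ⟨hpos, (hWq σ hσf hσc).1, (hWq σ hσf hσc).2⟩
      exact carrier_unique hσf hsq hrepσ hsqrep
    · rintro rfl
      refine ⟨by rw [hT, Finset.mem_filter, Set.Finite.mem_toFinset]; exact ⟨hsq, hsqcard⟩, ?_⟩
      rw [Finset.filter_eq_empty_iff]
      intro v hv
      have heq := weights_eq (K.indep hsq) (hWq σ hsq hsqcard).1 hsqrep.2.1
        ((hWq σ hsq hsqcard).2.trans hsqrep.2.2.symm) v hv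
      rw [heq]
      exact not_lt_of_gt (hsqrep.1 v hv)
  rw [← Finset.sum_filter, hfinal, Finset.sum_singleton]
end
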